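/- arXiv:1806.03042 — 4 statements merged into one kernel-verified Lean document; each statement's English description precedes it below -/
import Mathlib

section
/- Let (A,R) be a quasitriangular Hopf algebra over a field k with R = ∑ R⁽¹⁾ ⊗ R⁽²⁾, and set u := ∑ S(R⁽²⁾)R⁽¹⁾ ∈ A. Then u is invertible and S²(a) = u a u⁻¹ for all a ∈ A; moreover u⁻¹ = ∑ R⁽²⁾ S²(R⁽¹⁾) and ε(u) = 1. -/
open TensorProduct HopfAlgebra

noncomputable section

variable (k A : Type*) [Field k] [Ring A] [HopfAlgebra k A]

/-- The element `R₁₂ = ∑ R⁽¹⁾ ⊗ R⁽²⁾ ⊗ 1` of `A ⊗ A ⊗ A`, as an algebra map applied to `R`. -/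
def r12 : A ⊗[k] A →ₐ[k] A ⊗[k] (A ⊗[k] A) :=
  Algebra.TensorProduct.map (AlgHom.id k A) Algebra.TensorProduct.includeLeft

/-- `R₁₃ = ∑ R⁽¹⁾ ⊗ 1 ⊗ R⁽²⁾`. -/
def r13 : A ⊗[k] A →ₐ[k] A ⊗[k] (A ⊗[k] A) :=
  Algebra.TensorProduct.map (AlgHom.id k A) Algebra.TensorProduct.includeRight

/-- `R₂₃ = ∑ 1 ⊗ R⁽¹⁾ ⊗ R⁽²⁾`. -/
def r23 : A ⊗[k] A →ₐ[k] A ⊗[k] (A ⊗[k] A) :=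
  Algebra.TensorProduct.includeRight

/-- `R ∈ A ⊗ A` is a universal R-matrix: it is invertible and satisfies the Drinfeld axioms
`(Δ ⊗ id)(R) = R₁₃R₂₃`, `(id ⊗ Δ)(R) = R₁₃R₁₂` and `R Δ(a) = Δᵒᵖ(a) R`. -/
def IsUniversalRMatrix (R : A ⊗[k] A) : Prop :=
  IsUnit R ∧
  (TensorProduct.assoc k A A A) (LinearMap.rTensor A Coalgebra.comul R)
      = r13 k A R * r23 k A R ∧
  LinearMap.lTensor A Coalgebra.comul R = r13 k A R * r12 k A R ∧
  ∀ a : A, R * Coalgebra.comul a = (TensorProduct.comm k A A) (Coalgebra.comul a) * R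

/-- The Drinfeld element `u = ∑ S(R⁽²⁾) R⁽¹⁾` of a quasitriangular Hopf algebra. -/
def drinfeldElement (R : A ⊗[k] A) : A :=
  LinearMap.mul' k A
    (LinearMap.rTensor A (antipode (R := k)) ((TensorProduct.comm k A A) R))

end

noncomputable section
open Coalgebra

variable {k A : Type*} [Field k] [Ring A] [HopfAlgebra k A]

local notation "S" => antipode (R := k) (A := A)
local notation "ε" => Coalgebra.counit (R := k) (A := A)
local notation "δ" => Coalgebra.comul (R := k) (A := A)

/-- x ⊗ (y ⊗ z) ↦ f x * (g y * h z) -/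
private def T3map (f g h : A →ₗ[k] A) : A ⊗[k] (A ⊗[k] A) →ₗ[k] A :=
  LinearMap.mul' k A ∘ₗ (LinearMap.mul' k A).lTensor A ∘ₗ
    TensorProduct.map f (TensorProduct.map g h)

@[simp] private lemma T3map_tmul (f g h : A →ₗ[k] A) (x y z : A) :
    T3map f g h (x ⊗ₜ (y ⊗ₜ z)) = f x * (g y * h z) := by
  simp [T3map, LinearMap.mul'_apply]

private lemma hopf1 {c : A} (rc : Coalgebra.Repr k c (A × A)) (z : A) :
    ∑ j ∈ rc.index, S (rc.left j) * (rc.right j * z) = ε c • z := by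
  have h := sum_antipode_mul_eq_smul (R := k) rc
  calc ∑ j ∈ rc.index, S (rc.left j) * (rc.right j * z)
      = (∑ j ∈ rc.index, S (rc.left j) * rc.right j) * z := by
        rw [Finset.sum_mul]; simp [mul_assoc]
    _ = ε c • z := by rw [h, smul_mul_assoc, one_mul]

private lemma hopf2 {c : A} (rc : Coalgebra.Repr k c (A × A)) (z : A) :
    ∑ j ∈ rc.index, rc.left j * (S (rc.right j) * z) = ε c • z := by
  have h := sum_mul_antipode_eq_smul (R := k) rc
  calc ∑ j ∈ rc.index, rc.left j * (S (rc.right j) * z)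
      = (∑ j ∈ rc.index, rc.left j * S (rc.right j)) * z := by
        rw [Finset.sum_mul]; simp [mul_assoc]
    _ = ε c • z := by rw [h, smul_mul_assoc, one_mul]

private lemma cL' {a : A} (r : Coalgebra.Repr k a (A × A)) :
    ∑ i ∈ r.index, ε (r.left i) • r.right i = a := by
  have h := Coalgebra.sum_counit_tmul_eq r
  apply_fun (TensorProduct.lid k A) at h
  simpa only [map_sum, TensorProduct.lid_tmul, one_smul] using h

private lemma cR' {a : A} (r : Coalgebra.Repr k a (A × A)) :
    ∑ i ∈ r.index, ε (r.right i) • r.left i = a := by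
  have h := Coalgebra.sum_tmul_counit_eq r
  apply_fun (TensorProduct.rid k A) at h
  simpa only [map_sum, TensorProduct.rid_tmul, one_smul] using h

private lemma S_one : S (1 : A) = 1 := by
  have h := mul_antipode_rTensor_comul_apply (R := k) (1 : A)
  simpa [Algebra.TensorProduct.one_def] using h

private lemma counit_S (a : A) : ε (S a) = ε a := by
  obtain r := Coalgebra.Repr.arbitrary k a
  have h := congrArg ε (sum_antipode_mul_eq_algebraMap_counit (R := k) r)
  rw [map_sum] at h
  simp only [Bialgebra.counit_mul, Bialgebra.counit_algebraMap] at h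
  calc ε (S a) = ε (S (∑ i ∈ r.index, ε (r.right i) • r.left i)) := by rw [cR' r]
    _ = ∑ i ∈ r.index, ε (r.right i) * ε (S (r.left i)) := by
        rw [map_sum, map_sum]; simp [mul_comm]
    _ = ε a := by simpa [mul_comm] using h

private lemma inner_collapse {c d : A} (rc : Coalgebra.Repr k c (A × A)) (rd : Coalgebra.Repr k d (A × A)) :
    ∑ j ∈ rc.index, ∑ q ∈ rd.index,
      (rc.left j * rd.left q) * S (rc.right j * rd.right q) = (ε c * ε d) • (1 : A) := by
  have h1 : (δ (c * d) : A ⊗[k] A) = ∑ j ∈ rc.index, ∑ q ∈ rd.index,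
      (rc.left j * rd.left q) ⊗ₜ[k] (rc.right j * rd.right q) := by
    rw [Bialgebra.comul_mul, ← rc.eq, ← rd.eq, Finset.sum_mul_sum]
    simp [Algebra.TensorProduct.tmul_mul_tmul]
  have h2 := mul_antipode_lTensor_comul_apply (R := k) (c * d)
  rw [h1] at h2
  simp only [map_sum, LinearMap.lTensor_tmul, LinearMap.mul'_apply] at h2
  rw [h2, Bialgebra.counit_mul, Algebra.algebraMap_eq_smul_one]

private lemma dirA (a b : A) (ra : Coalgebra.Repr k a (A × A)) (rb : Coalgebra.Repr k b (A × A))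
    (a2 : ∀ i, Coalgebra.Repr k (ra.right i) (A × A))
    (b2 : ∀ p, Coalgebra.Repr k (rb.right p) (A × A)) :
    (∑ i ∈ ra.index, ∑ p ∈ rb.index, ∑ j ∈ (a2 i).index, ∑ q ∈ (b2 p).index,
      S (rb.left p) * S (ra.left i) *
        (((a2 i).left j * (b2 p).left q) * S ((a2 i).right j * (b2 p).right q)))
    = S b * S a := by
  have step1 : ∀ i ∈ ra.index, ∀ p ∈ rb.index,
      (∑ j ∈ (a2 i).index, ∑ q ∈ (b2 p).index,
        S (rb.left p) * S (ra.left i) *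
          (((a2 i).left j * (b2 p).left q) * S ((a2 i).right j * (b2 p).right q)))
      = (ε (rb.right p) • S (rb.left p)) * (ε (ra.right i) • S (ra.left i)) := by
    intro i _ p _
    simp only [← Finset.mul_sum]
    rw [inner_collapse (a2 i) (b2 p)]
    rw [mul_smul_comm, mul_one, smul_mul_smul_comm, mul_comm (ε (ra.right i))]
  calc (∑ i ∈ ra.index, ∑ p ∈ rb.index, ∑ j ∈ (a2 i).index, ∑ q ∈ (b2 p).index,
      S (rb.left p) * S (ra.left i) *
        (((a2 i).left j * (b2 p).left q) * S ((a2 i).right j * (b2 p).right q)))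
      = ∑ i ∈ ra.index, ∑ p ∈ rb.index,
          (ε (rb.right p) • S (rb.left p)) * (ε (ra.right i) • S (ra.left i)) := by
        refine Finset.sum_congr rfl fun i hi => Finset.sum_congr rfl fun p hp => ?_
        exact step1 i hi p hp
    _ = (∑ p ∈ rb.index, ε (rb.right p) • S (rb.left p)) *
          (∑ i ∈ ra.index, ε (ra.right i) • S (ra.left i)) := by
        rw [Finset.sum_mul_sum, Finset.sum_comm]
    _ = S b * S a := by
        have hb : (∑ p ∈ rb.index, ε (rb.right p) • S (rb.left p)) = S b := by
          have h : S (∑ p ∈ rb.index, ε (rb.right p) • rb.left p) = S b := by rw [cR' rb]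
          rw [map_sum] at h; simp only [map_smul] at h; exact h
        have ha : (∑ i ∈ ra.index, ε (ra.right i) • S (ra.left i)) = S a := by
          have h : S (∑ i ∈ ra.index, ε (ra.right i) • ra.left i) = S a := by rw [cR' ra]
          rw [map_sum] at h; simp only [map_smul] at h; exact h
        exact congrArg₂ (· * ·) hb ha

private lemma dirB (a b : A) (ra : Coalgebra.Repr k a (A × A)) (rb : Coalgebra.Repr k b (A × A))
    (a1 : ∀ i, Coalgebra.Repr k (ra.left i) (A × A)) (a2 : ∀ i, Coalgebra.Repr k (ra.right i) (A × A))
    (b1 : ∀ p, Coalgebra.Repr k (rb.left p) (A × A)) (b2 : ∀ p, Coalgebra.Repr k (rb.right p) (A × A)) :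
    (∑ i ∈ ra.index, ∑ p ∈ rb.index, ∑ j ∈ (a2 i).index, ∑ q ∈ (b2 p).index,
      S (rb.left p) * S (ra.left i) *
        (((a2 i).left j * (b2 p).left q) * S ((a2 i).right j * (b2 p).right q)))
    = S (a * b) := by
  set E₂ : A := ∑ p ∈ rb.index, ∑ q ∈ (b2 p).index,
      S (rb.left p) * ((b2 p).left q * S (a * (b2 p).right q)) with hE₂
  have step1 : (∑ i ∈ ra.index, ∑ p ∈ rb.index, ∑ j ∈ (a2 i).index, ∑ q ∈ (b2 p).index,
      S (rb.left p) * S (ra.left i) *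
        (((a2 i).left j * (b2 p).left q) * S ((a2 i).right j * (b2 p).right q))) = E₂ := by
    have hco := Coalgebra.sum_tmul_tmul_eq ra a1 a2
    have h := congrArg (fun z => (∑ p ∈ rb.index, ∑ q ∈ (b2 p).index,
      T3map (LinearMap.mulLeft k (S (rb.left p)) ∘ₗ S)
        (LinearMap.mulRight k ((b2 p).left q))
        (S ∘ₗ LinearMap.mulRight k ((b2 p).right q)) : A ⊗[k] (A ⊗[k] A) →ₗ[k] A) z) hco
    simp only [map_sum, LinearMap.sum_apply, T3map_tmul, LinearMap.comp_apply,
      LinearMap.mulLeft_apply, LinearMap.mulRight_apply] at h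
    calc (∑ i ∈ ra.index, ∑ p ∈ rb.index, ∑ j ∈ (a2 i).index, ∑ q ∈ (b2 p).index,
        S (rb.left p) * S (ra.left i) *
          (((a2 i).left j * (b2 p).left q) * S ((a2 i).right j * (b2 p).right q)))
        = ∑ i ∈ ra.index, ∑ j ∈ (a2 i).index, ∑ p ∈ rb.index, ∑ q ∈ (b2 p).index,
            S (rb.left p) * S (ra.left i) *
              (((a2 i).left j * (b2 p).left q) * S ((a2 i).right j * (b2 p).right q)) := by
          exact Finset.sum_congr rfl fun i _ => Finset.sum_comm
      _ = ∑ i ∈ ra.index, ∑ j ∈ (a1 i).index, ∑ p ∈ rb.index, ∑ q ∈ (b2 p).index,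
            S (rb.left p) * S ((a1 i).left j) *
              (((a1 i).right j * (b2 p).left q) * S (ra.right i * (b2 p).right q)) := h.symm
      _ = E₂ := ?_
    rw [hE₂]
    calc (∑ i ∈ ra.index, ∑ j ∈ (a1 i).index, ∑ p ∈ rb.index, ∑ q ∈ (b2 p).index,
          S (rb.left p) * S ((a1 i).left j) *
            (((a1 i).right j * (b2 p).left q) * S (ra.right i * (b2 p).right q)))
        = ∑ i ∈ ra.index, ∑ p ∈ rb.index, ∑ j ∈ (a1 i).index, ∑ q ∈ (b2 p).index,
            S (rb.left p) * (S ((a1 i).left j) * ((a1 i).right j *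
              ((b2 p).left q * S (ra.right i * (b2 p).right q)))) := by
          refine Finset.sum_congr rfl fun i _ => ?_
          rw [Finset.sum_comm]
          exact Finset.sum_congr rfl fun p _ => Finset.sum_congr rfl fun j _ =>
            Finset.sum_congr rfl fun q _ => by simp only [mul_assoc]
      _ = ∑ i ∈ ra.index, ∑ p ∈ rb.index,
            ε (ra.left i) • (S (rb.left p) * ∑ q ∈ (b2 p).index,
              ((b2 p).left q * S (ra.right i * (b2 p).right q))) := by
          refine Finset.sum_congr rfl fun i _ => Finset.sum_congr rfl fun p _ => ?_
          simp only [← Finset.mul_sum]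
          rw [show (∑ j ∈ (a1 i).index, S ((a1 i).left j) * ((a1 i).right j *
              (∑ q ∈ (b2 p).index, (b2 p).left q * S (ra.right i * (b2 p).right q)))) =
            ε (ra.left i) • (∑ q ∈ (b2 p).index,
              (b2 p).left q * S (ra.right i * (b2 p).right q)) from hopf1 (a1 i) _]
          rw [mul_smul_comm]
      _ = E₂ := ?_
    rw [hE₂, Finset.sum_comm]
    refine Finset.sum_congr rfl fun p _ => ?_
    calc (∑ i ∈ ra.index, ε (ra.left i) • (S (rb.left p) * ∑ q ∈ (b2 p).index,
            ((b2 p).left q * S (ra.right i * (b2 p).right q))))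
        = S (rb.left p) * ∑ q ∈ (b2 p).index, ((b2 p).left q *
            S ((∑ i ∈ ra.index, ε (ra.left i) • ra.right i) * (b2 p).right q)) := by
          rw [Finset.mul_sum]
          simp only [Finset.sum_mul, Finset.smul_sum, map_sum, Finset.mul_sum, smul_mul_assoc,
            map_smul, mul_smul_comm]
          rw [Finset.sum_comm]
      _ = ∑ q ∈ (b2 p).index, S (rb.left p) * ((b2 p).left q * S (a * (b2 p).right q)) := by
          rw [cL' ra, Finset.mul_sum]
  rw [step1, hE₂]
  have hco := Coalgebra.sum_tmul_tmul_eq rb b1 b2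
  have h := congrArg (fun z => (T3map (A := A) S LinearMap.id
      (S ∘ₗ LinearMap.mulLeft k a) : A ⊗[k] (A ⊗[k] A) →ₗ[k] A) z) hco
  simp only [map_sum, T3map_tmul, LinearMap.comp_apply, LinearMap.id_apply,
    LinearMap.mulLeft_apply] at h
  rw [← h]
  calc (∑ p ∈ rb.index, ∑ q ∈ (b1 p).index,
        S ((b1 p).left q) * ((b1 p).right q * S (a * rb.right p)))
      = ∑ p ∈ rb.index, ε (rb.left p) • S (a * rb.right p) := by
        exact Finset.sum_congr rfl fun p _ => hopf1 (b1 p) _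
    _ = S (a * ∑ p ∈ rb.index, ε (rb.left p) • rb.right p) := by
        refine Eq.symm ?_
        rw [Finset.mul_sum, map_sum]
        exact Finset.sum_congr rfl fun p _ => by rw [mul_smul_comm, map_smul]
    _ = S (a * b) := by rw [cL' rb]

private lemma S_mul (a b : A) : S (a * b) = S b * S a := by
  have ra := Coalgebra.Repr.arbitrary k a
  have rb := Coalgebra.Repr.arbitrary k b
  have a1 : ∀ i, Coalgebra.Repr k (ra.left i) (A × A) := fun i => Coalgebra.Repr.arbitrary k _
  have a2 : ∀ i, Coalgebra.Repr k (ra.right i) (A × A) := fun i => Coalgebra.Repr.arbitrary k _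
  have b1 : ∀ p, Coalgebra.Repr k (rb.left p) (A × A) := fun p => Coalgebra.Repr.arbitrary k _
  have b2 : ∀ p, Coalgebra.Repr k (rb.right p) (A × A) := fun p => Coalgebra.Repr.arbitrary k _
  rw [← dirB a b ra rb a1 a2 b1 b2, dirA a b ra rb a2 b2]

end

noncomputable section

variable (k A : Type*) [Field k] [Ring A] [HopfAlgebra k A]

set_option maxHeartbeats 3000000 in
/-- The Drinfeld element `u` is invertible with inverse `∑ R⁽²⁾ S²(R⁽¹⁾)`,
it satisfies `S²(a) = u a u⁻¹` for all `a`, and `ε(u) = 1`. -/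
theorem drinfeldElement_spec (R : A ⊗[k] A) (hR : IsUniversalRMatrix k A R) :
    ∃ w : A,
      drinfeldElement k A R * w = 1 ∧ w * drinfeldElement k A R = 1 ∧
      w = LinearMap.mul' k A
            (LinearMap.lTensor A ((antipode (R := k)) ∘ₗ (antipode (R := k)))
              ((TensorProduct.comm k A A) R)) ∧
      (∀ a : A, (antipode (R := k)) ((antipode (R := k)) a)
          = drinfeldElement k A R * a * w) ∧
      Coalgebra.counit (R := k) (drinfeldElement k A R) = (1 : k) := by
  obtain ⟨F, hF⟩ := TensorProduct.exists_finset (R := k) R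
  have rs : ∀ m : A × A, Coalgebra.Repr k m.1 (A × A) := fun m => Coalgebra.Repr.arbitrary k m.1
  have rt : ∀ m : A × A, Coalgebra.Repr k m.2 (A × A) := fun m => Coalgebra.Repr.arbitrary k m.2
  -- expansion of u and w
  have hu : drinfeldElement k A R = ∑ m ∈ F, antipode (R := k) m.2 * m.1 := by
    rw [drinfeldElement, hF]
    simp only [map_sum, TensorProduct.comm_tmul, LinearMap.rTensor_tmul, LinearMap.mul'_apply]
  have hw : LinearMap.mul' k A
      (LinearMap.lTensor A ((antipode (R := k)) ∘ₗ (antipode (R := k)))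
        ((TensorProduct.comm k A A) R))
      = ∑ m ∈ F, m.2 * antipode (R := k) (antipode (R := k) m.1) := by
    rw [hF]
    simp only [map_sum, TensorProduct.comm_tmul, LinearMap.lTensor_tmul, LinearMap.mul'_apply,
      LinearMap.comp_apply]
  -- the two hexagon identities, in fully expanded form
  have H1 : (∑ m ∈ F, ∑ j ∈ (rs m).index, (rs m).left j ⊗ₜ[k] ((rs m).right j ⊗ₜ[k] m.2))
      = ∑ m ∈ F, ∑ n ∈ F, m.1 ⊗ₜ[k] (n.1 ⊗ₜ[k] (m.2 * n.2)) := by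
    have h := hR.2.1
    rw [hF] at h
    have hL : (TensorProduct.assoc k A A A)
        (LinearMap.rTensor A Coalgebra.comul (∑ m ∈ F, m.1 ⊗ₜ[k] m.2))
        = ∑ m ∈ F, ∑ j ∈ (rs m).index,
            (rs m).left j ⊗ₜ[k] ((rs m).right j ⊗ₜ[k] m.2) := by
      rw [map_sum, map_sum]
      refine Finset.sum_congr rfl fun m _ => ?_
      rw [LinearMap.rTensor_tmul, ← (rs m).eq, TensorProduct.sum_tmul, map_sum]
      exact Finset.sum_congr rfl fun j _ => by rw [TensorProduct.assoc_tmul]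
    have hRt : r13 k A (∑ m ∈ F, m.1 ⊗ₜ[k] m.2) * r23 k A (∑ m ∈ F, m.1 ⊗ₜ[k] m.2)
        = ∑ m ∈ F, ∑ n ∈ F, m.1 ⊗ₜ[k] (n.1 ⊗ₜ[k] (m.2 * n.2)) := by
      rw [map_sum, map_sum, Finset.sum_mul_sum]
      refine Finset.sum_congr rfl fun m _ => Finset.sum_congr rfl fun n _ => ?_
      simp only [r13, r23, Algebra.TensorProduct.map_tmul, AlgHom.coe_id, id_eq,
        Algebra.TensorProduct.includeRight_apply, Algebra.TensorProduct.tmul_mul_tmul,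
        one_mul, mul_one]
    rw [← hL, ← hRt]; exact h
  have H2 : (∑ m ∈ F, ∑ j ∈ (rt m).index, m.1 ⊗ₜ[k] ((rt m).left j ⊗ₜ[k] (rt m).right j))
      = ∑ m ∈ F, ∑ n ∈ F, (m.1 * n.1) ⊗ₜ[k] (n.2 ⊗ₜ[k] m.2) := by
    have h := hR.2.2.1
    rw [hF] at h
    have hL : LinearMap.lTensor A Coalgebra.comul (∑ m ∈ F, m.1 ⊗ₜ[k] m.2)
        = ∑ m ∈ F, ∑ j ∈ (rt m).index, m.1 ⊗ₜ[k] ((rt m).left j ⊗ₜ[k] (rt m).right j) := by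
      rw [map_sum]
      refine Finset.sum_congr rfl fun m _ => ?_
      rw [LinearMap.lTensor_tmul, ← (rt m).eq, TensorProduct.tmul_sum]
    have hRt : r13 k A (∑ m ∈ F, m.1 ⊗ₜ[k] m.2) * r12 k A (∑ m ∈ F, m.1 ⊗ₜ[k] m.2)
        = ∑ m ∈ F, ∑ n ∈ F, (m.1 * n.1) ⊗ₜ[k] (n.2 ⊗ₜ[k] m.2) := by
      rw [map_sum, map_sum, Finset.sum_mul_sum]
      refine Finset.sum_congr rfl fun m _ => Finset.sum_congr rfl fun n _ => ?_
      simp only [r13, r12, Algebra.TensorProduct.map_tmul, AlgHom.coe_id, id_eq,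
        Algebra.TensorProduct.includeRight_apply, Algebra.TensorProduct.includeLeft_apply,
        Algebra.TensorProduct.tmul_mul_tmul, one_mul, mul_one]
    rw [← hL, ← hRt]; exact h
  -- (ε ⊗ id) R = 1
  have E1 : (∑ n ∈ F, Coalgebra.counit (R := k) n.1 • n.2) = 1 := by
    have h := congrArg (fun z => (LinearMap.lTensor A ((TensorProduct.lid k A).toLinearMap ∘ₗ
      TensorProduct.map (Coalgebra.counit (R := k)) LinearMap.id) :
        A ⊗[k] (A ⊗[k] A) →ₗ[k] A ⊗[k] A) z) H1
    simp only [map_sum, LinearMap.lTensor_tmul, LinearMap.coe_comp, LinearEquiv.coe_coe,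
      Function.comp_apply, TensorProduct.map_tmul, LinearMap.id_coe, id_eq,
      TensorProduct.lid_tmul] at h
    have hL2 : (∑ m ∈ F, ∑ j ∈ (rs m).index,
        (rs m).left j ⊗ₜ[k] (Coalgebra.counit (R := k) ((rs m).right j) • m.2)) = R := by
      rw [hF]
      refine Finset.sum_congr rfl fun m _ => ?_
      calc (∑ j ∈ (rs m).index,
            (rs m).left j ⊗ₜ[k] (Coalgebra.counit (R := k) ((rs m).right j) • m.2))
          = (∑ j ∈ (rs m).index,
              Coalgebra.counit (R := k) ((rs m).right j) • (rs m).left j) ⊗ₜ[k] m.2 := by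
            rw [TensorProduct.sum_tmul]
            exact Finset.sum_congr rfl fun j _ => by
              rw [TensorProduct.tmul_smul, TensorProduct.smul_tmul']
        _ = m.1 ⊗ₜ[k] m.2 := by rw [cR' (rs m)]
    have hR2 : (∑ m ∈ F, ∑ n ∈ F,
        m.1 ⊗ₜ[k] (Coalgebra.counit (R := k) n.1 • (m.2 * n.2)))
        = R * ((1:A) ⊗ₜ[k] (∑ n ∈ F, Coalgebra.counit (R := k) n.1 • n.2)) := by
      rw [hF, Finset.sum_mul]
      refine Finset.sum_congr rfl fun m _ => ?_
      rw [TensorProduct.tmul_sum, Finset.mul_sum]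
      refine Finset.sum_congr rfl fun n _ => ?_
      rw [Algebra.TensorProduct.tmul_mul_tmul, mul_one, mul_smul_comm, TensorProduct.tmul_smul]
    rw [hL2, hR2] at h
    have hcan : ((1:A) ⊗ₜ[k] (∑ n ∈ F, Coalgebra.counit (R := k) n.1 • n.2)) = 1 := by
      refine hR.1.mul_left_cancel ?_
      rw [← h, mul_one]
    have h2 := congrArg (fun z => ((TensorProduct.lid k A).toLinearMap ∘ₗ
      TensorProduct.map (Coalgebra.counit (R := k)) LinearMap.id : A ⊗[k] A →ₗ[k] A) z) hcan
    simpa [Algebra.TensorProduct.one_def] using h2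
  -- (id ⊗ ε) R = 1
  have E2 : (∑ m ∈ F, Coalgebra.counit (R := k) m.2 • m.1) = 1 := by
    have h := congrArg (fun z => (LinearMap.lTensor A ((TensorProduct.rid k A).toLinearMap ∘ₗ
      TensorProduct.map LinearMap.id (Coalgebra.counit (R := k))) :
        A ⊗[k] (A ⊗[k] A) →ₗ[k] A ⊗[k] A) z) H2
    simp only [map_sum, LinearMap.lTensor_tmul, LinearMap.coe_comp, LinearEquiv.coe_coe,
      Function.comp_apply, TensorProduct.map_tmul, LinearMap.id_coe, id_eq,
      TensorProduct.rid_tmul] at h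
    have hL2 : (∑ m ∈ F, ∑ j ∈ (rt m).index,
        m.1 ⊗ₜ[k] (Coalgebra.counit (R := k) ((rt m).right j) • (rt m).left j)) = R := by
      rw [hF]
      refine Finset.sum_congr rfl fun m _ => ?_
      rw [← TensorProduct.tmul_sum, cR' (rt m)]
    have hR2 : (∑ m ∈ F, ∑ n ∈ F,
        (m.1 * n.1) ⊗ₜ[k] (Coalgebra.counit (R := k) m.2 • n.2))
        = ((∑ m ∈ F, Coalgebra.counit (R := k) m.2 • m.1) ⊗ₜ[k] (1:A)) * R := by
      rw [hF, TensorProduct.sum_tmul, Finset.sum_mul]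
      refine Finset.sum_congr rfl fun m _ => ?_
      rw [Finset.mul_sum]
      refine Finset.sum_congr rfl fun n _ => ?_
      simp [Algebra.TensorProduct.tmul_mul_tmul, smul_mul_assoc, TensorProduct.smul_tmul',
        TensorProduct.tmul_smul]
    rw [hL2, hR2] at h
    have hcan : ((∑ m ∈ F, Coalgebra.counit (R := k) m.2 • m.1) ⊗ₜ[k] (1:A)) = 1 := by
      refine hR.1.mul_right_cancel ?_
      rw [← h, one_mul]
    have h2 := congrArg (fun z => ((TensorProduct.rid k A).toLinearMap ∘ₗ
      TensorProduct.map LinearMap.id (Coalgebra.counit (R := k)) : A ⊗[k] A →ₗ[k] A) z) hcan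
    simpa [Algebra.TensorProduct.one_def] using h2
  -- R' = (S ⊗ id) R is a two-sided inverse of R
  have E4a : (∑ m ∈ F, antipode (R := k) m.1 ⊗ₜ[k] m.2) * R = 1 := by
    have h := congrArg (fun z => ((LinearMap.mul' k A ∘ₗ
      TensorProduct.map (antipode (R := k)) LinearMap.id).rTensor A ∘ₗ
      (TensorProduct.assoc k A A A).symm.toLinearMap : A ⊗[k] (A ⊗[k] A) →ₗ[k] A ⊗[k] A) z) H1
    simp only [map_sum, LinearMap.coe_comp, LinearEquiv.coe_coe, Function.comp_apply,
      TensorProduct.assoc_symm_tmul, LinearMap.rTensor_tmul, TensorProduct.map_tmul,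
      LinearMap.mul'_apply, LinearMap.id_coe, id_eq] at h
    have hL2 : (∑ m ∈ F, ∑ j ∈ (rs m).index,
        (antipode (R := k) ((rs m).left j) * (rs m).right j) ⊗ₜ[k] m.2) = 1 := by
      calc (∑ m ∈ F, ∑ j ∈ (rs m).index,
            (antipode (R := k) ((rs m).left j) * (rs m).right j) ⊗ₜ[k] m.2)
          = ∑ m ∈ F, Coalgebra.counit (R := k) m.1 • ((1:A) ⊗ₜ[k] m.2) := by
            refine Finset.sum_congr rfl fun m _ => ?_
            rw [← TensorProduct.sum_tmul, sum_antipode_mul_eq_smul (rs m),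
              TensorProduct.smul_tmul']
        _ = (1:A) ⊗ₜ[k] (∑ n ∈ F, Coalgebra.counit (R := k) n.1 • n.2) := by
            rw [TensorProduct.tmul_sum]
            exact Finset.sum_congr rfl fun m _ => by rw [TensorProduct.tmul_smul]
        _ = 1 := by rw [E1, Algebra.TensorProduct.one_def]
    have hR2 : (∑ m ∈ F, ∑ n ∈ F,
        (antipode (R := k) m.1 * n.1) ⊗ₜ[k] (m.2 * n.2))
        = (∑ m ∈ F, antipode (R := k) m.1 ⊗ₜ[k] m.2) * R := by
      rw [hF, Finset.sum_mul_sum]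
      exact Finset.sum_congr rfl fun m _ => Finset.sum_congr rfl fun n _ => by
        rw [Algebra.TensorProduct.tmul_mul_tmul]
    rw [hL2, hR2] at h
    exact h.symm
  have E4b : R * (∑ m ∈ F, antipode (R := k) m.1 ⊗ₜ[k] m.2) = 1 := by
    have h := congrArg (fun z => ((LinearMap.mul' k A ∘ₗ
      TensorProduct.map LinearMap.id (antipode (R := k))).rTensor A ∘ₗ
      (TensorProduct.assoc k A A A).symm.toLinearMap : A ⊗[k] (A ⊗[k] A) →ₗ[k] A ⊗[k] A) z) H1
    simp only [map_sum, LinearMap.coe_comp, LinearEquiv.coe_coe, Function.comp_apply,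
      TensorProduct.assoc_symm_tmul, LinearMap.rTensor_tmul, TensorProduct.map_tmul,
      LinearMap.mul'_apply, LinearMap.id_coe, id_eq] at h
    have hL2 : (∑ m ∈ F, ∑ j ∈ (rs m).index,
        ((rs m).left j * antipode (R := k) ((rs m).right j)) ⊗ₜ[k] m.2) = 1 := by
      calc (∑ m ∈ F, ∑ j ∈ (rs m).index,
            ((rs m).left j * antipode (R := k) ((rs m).right j)) ⊗ₜ[k] m.2)
          = ∑ m ∈ F, Coalgebra.counit (R := k) m.1 • ((1:A) ⊗ₜ[k] m.2) := by
            refine Finset.sum_congr rfl fun m _ => ?_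
            rw [← TensorProduct.sum_tmul, sum_mul_antipode_eq_smul (rs m),
              TensorProduct.smul_tmul']
        _ = (1:A) ⊗ₜ[k] (∑ n ∈ F, Coalgebra.counit (R := k) n.1 • n.2) := by
            rw [TensorProduct.tmul_sum]
            exact Finset.sum_congr rfl fun m _ => by rw [TensorProduct.tmul_smul]
        _ = 1 := by rw [E1, Algebra.TensorProduct.one_def]
    have hR2 : (∑ m ∈ F, ∑ n ∈ F,
        (m.1 * antipode (R := k) n.1) ⊗ₜ[k] (m.2 * n.2))
        = R * (∑ n ∈ F, antipode (R := k) n.1 ⊗ₜ[k] n.2) := by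
      rw [hF, Finset.sum_mul_sum]
      exact Finset.sum_congr rfl fun m _ => Finset.sum_congr rfl fun n _ => by
        rw [Algebra.TensorProduct.tmul_mul_tmul]
    rw [hL2, hR2] at h
    exact h.symm
  -- (S ⊗ S) R = R
  have E5 : (∑ m ∈ F, antipode (R := k) m.1 ⊗ₜ[k] antipode (R := k) m.2) = R := by
    have h := congrArg (fun z => (TensorProduct.map (antipode (R := k))
      (LinearMap.mul' k A ∘ₗ TensorProduct.map LinearMap.id (antipode (R := k))) :
        A ⊗[k] (A ⊗[k] A) →ₗ[k] A ⊗[k] A) z) H2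
    simp only [map_sum, TensorProduct.map_tmul, LinearMap.coe_comp, Function.comp_apply,
      LinearMap.mul'_apply, LinearMap.id_coe, id_eq] at h
    have hL2 : (∑ m ∈ F, ∑ j ∈ (rt m).index,
        antipode (R := k) m.1 ⊗ₜ[k] ((rt m).left j * antipode (R := k) ((rt m).right j))) = 1 := by
      calc (∑ m ∈ F, ∑ j ∈ (rt m).index,
            antipode (R := k) m.1 ⊗ₜ[k] ((rt m).left j * antipode (R := k) ((rt m).right j)))
          = ∑ m ∈ F, (Coalgebra.counit (R := k) m.2 • antipode (R := k) m.1) ⊗ₜ[k] (1:A) := by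
            refine Finset.sum_congr rfl fun m _ => ?_
            rw [← TensorProduct.tmul_sum, sum_mul_antipode_eq_smul (rt m),
              TensorProduct.tmul_smul, TensorProduct.smul_tmul']
        _ = (antipode (R := k) (∑ m ∈ F, Coalgebra.counit (R := k) m.2 • m.1)) ⊗ₜ[k] (1:A) := by
            rw [← TensorProduct.sum_tmul, map_sum]
            refine congrArg (· ⊗ₜ[k] (1:A)) ?_
            exact Finset.sum_congr rfl fun m _ => by rw [map_smul]
        _ = 1 := by rw [E2, S_one, Algebra.TensorProduct.one_def]
    have hR2 : (∑ m ∈ F, ∑ n ∈ F,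
        antipode (R := k) (m.1 * n.1) ⊗ₜ[k] (n.2 * antipode (R := k) m.2))
        = (∑ n ∈ F, antipode (R := k) n.1 ⊗ₜ[k] n.2) *
            (∑ m ∈ F, antipode (R := k) m.1 ⊗ₜ[k] antipode (R := k) m.2) := by
      rw [Finset.sum_mul_sum, Finset.sum_comm]
      exact Finset.sum_congr rfl fun m _ => Finset.sum_congr rfl fun n _ => by
        rw [Algebra.TensorProduct.tmul_mul_tmul, S_mul]
    rw [hL2, hR2] at h
    calc (∑ m ∈ F, antipode (R := k) m.1 ⊗ₜ[k] antipode (R := k) m.2)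
        = (R * (∑ n ∈ F, antipode (R := k) n.1 ⊗ₜ[k] n.2)) *
            (∑ m ∈ F, antipode (R := k) m.1 ⊗ₜ[k] antipode (R := k) m.2) := by
          rw [E4b, one_mul]
      _ = R * ((∑ n ∈ F, antipode (R := k) n.1 ⊗ₜ[k] n.2) *
            (∑ m ∈ F, antipode (R := k) m.1 ⊗ₜ[k] antipode (R := k) m.2)) := by
          rw [mul_assoc]
      _ = R := by rw [← h, mul_one]
  obtain ⟨u, husum⟩ : ∃ u : A, u = ∑ m ∈ F, antipode (R := k) m.2 * m.1 := ⟨_, rfl⟩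
  obtain ⟨w, hwsum⟩ : ∃ w : A, w = ∑ m ∈ F, m.2 * antipode (R := k) (antipode (R := k) m.1) :=
    ⟨_, rfl⟩
  -- relation (B) : ∑ S(t) u S(s) = 1
  have B : (∑ m ∈ F, antipode (R := k) m.2 * (u * antipode (R := k) m.1)) = 1 := by
    have h := congrArg (fun z => ((T3map (antipode (R := k)) LinearMap.id (antipode (R := k))) ∘ₗ
      ((TensorProduct.assoc k A A A).toLinearMap ∘ₗ
        (TensorProduct.comm k A (A ⊗[k] A)).toLinearMap) ∘ₗ
      ((TensorProduct.assoc k A A A).toLinearMap ∘ₗ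
        (TensorProduct.comm k A (A ⊗[k] A)).toLinearMap) : A ⊗[k] (A ⊗[k] A) →ₗ[k] A) z) H1
    simp only [map_sum, LinearMap.coe_comp, LinearEquiv.coe_coe, Function.comp_apply,
      TensorProduct.comm_tmul, TensorProduct.assoc_tmul, T3map_tmul,
      LinearMap.id_coe, id_eq] at h
    have hL2 : (∑ m ∈ F, ∑ j ∈ (rs m).index, antipode (R := k) m.2 *
        ((rs m).left j * antipode (R := k) ((rs m).right j))) = 1 := by
      calc (∑ m ∈ F, ∑ j ∈ (rs m).index, antipode (R := k) m.2 *
            ((rs m).left j * antipode (R := k) ((rs m).right j)))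
          = ∑ m ∈ F, Coalgebra.counit (R := k) m.1 • antipode (R := k) m.2 := by
            refine Finset.sum_congr rfl fun m _ => ?_
            rw [← Finset.mul_sum, sum_mul_antipode_eq_smul (rs m), mul_smul_comm, mul_one]
        _ = antipode (R := k) (∑ n ∈ F, Coalgebra.counit (R := k) n.1 • n.2) := by
            rw [map_sum]
            exact Finset.sum_congr rfl fun m _ => by rw [map_smul]
        _ = 1 := by rw [E1, S_one]
    have hR2 : (∑ m ∈ F, ∑ n ∈ F, antipode (R := k) (m.2 * n.2) * (m.1 * antipode (R := k) n.1))
        = ∑ n ∈ F, antipode (R := k) n.2 * (u * antipode (R := k) n.1) := by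
      rw [Finset.sum_comm]
      refine Finset.sum_congr rfl fun n _ => ?_
      calc (∑ m ∈ F, antipode (R := k) (m.2 * n.2) * (m.1 * antipode (R := k) n.1))
          = ∑ m ∈ F, antipode (R := k) n.2 *
              ((antipode (R := k) m.2 * m.1) * antipode (R := k) n.1) := by
            exact Finset.sum_congr rfl fun m _ => by rw [S_mul]; simp only [mul_assoc]
        _ = antipode (R := k) n.2 *
              ((∑ m ∈ F, antipode (R := k) m.2 * m.1) * antipode (R := k) n.1) := by
            rw [← Finset.mul_sum, ← Finset.sum_mul]
        _ = antipode (R := k) n.2 * (u * antipode (R := k) n.1) := by rw [← husum]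
    rw [hL2, hR2] at h
    exact h.symm
  -- the (*) relation from the intertwining axiom
  have hstar : ∀ (b : A) (rb : Coalgebra.Repr k b (A × A)),
      (∑ j ∈ rb.index, antipode (R := k) (rb.right j) * (u * rb.left j))
      = ∑ j ∈ rb.index, ∑ m ∈ F, antipode (R := k) m.2 *
          (antipode (R := k) (rb.left j) * (rb.right j * m.1)) := by
    intro b rb
    have h0 := hR.2.2.2 b
    rw [hF, ← rb.eq] at h0
    have hL : (∑ m ∈ F, m.1 ⊗ₜ[k] m.2) * (∑ j ∈ rb.index, rb.left j ⊗ₜ[k] rb.right j)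
        = ∑ m ∈ F, ∑ j ∈ rb.index, (m.1 * rb.left j) ⊗ₜ[k] (m.2 * rb.right j) := by
      rw [Finset.sum_mul_sum]
      exact Finset.sum_congr rfl fun m _ => Finset.sum_congr rfl fun j _ => by
        rw [Algebra.TensorProduct.tmul_mul_tmul]
    have hRt : (TensorProduct.comm k A A) (∑ j ∈ rb.index, rb.left j ⊗ₜ[k] rb.right j) *
        (∑ m ∈ F, m.1 ⊗ₜ[k] m.2)
        = ∑ j ∈ rb.index, ∑ m ∈ F, (rb.right j * m.1) ⊗ₜ[k] (rb.left j * m.2) := by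
      rw [map_sum, Finset.sum_mul_sum]
      refine Finset.sum_congr rfl fun j _ => Finset.sum_congr rfl fun m _ => by
        rw [TensorProduct.comm_tmul, Algebra.TensorProduct.tmul_mul_tmul]
    rw [hL, hRt] at h0
    have h := congrArg (fun z => ((LinearMap.mul' k A) ∘ₗ
      TensorProduct.map (antipode (R := k)) LinearMap.id ∘ₗ
      (TensorProduct.comm k A A).toLinearMap : A ⊗[k] A →ₗ[k] A) z) h0
    simp only [map_sum, LinearMap.coe_comp, LinearEquiv.coe_coe, Function.comp_apply,
      TensorProduct.comm_tmul, TensorProduct.map_tmul, LinearMap.mul'_apply,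
      LinearMap.id_coe, id_eq] at h
    calc (∑ j ∈ rb.index, antipode (R := k) (rb.right j) * (u * rb.left j))
        = ∑ m ∈ F, ∑ j ∈ rb.index,
            antipode (R := k) (m.2 * rb.right j) * (m.1 * rb.left j) := by
          rw [Finset.sum_comm]
          refine Finset.sum_congr rfl fun j _ => ?_
          calc antipode (R := k) (rb.right j) * (u * rb.left j)
              = antipode (R := k) (rb.right j) *
                  ((∑ m ∈ F, antipode (R := k) m.2 * m.1) * rb.left j) := by rw [← husum]
            _ = ∑ m ∈ F, antipode (R := k) (m.2 * rb.right j) * (m.1 * rb.left j) := by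
                rw [Finset.sum_mul, Finset.mul_sum]
                exact Finset.sum_congr rfl fun m _ => by rw [S_mul]; simp only [mul_assoc]
      _ = ∑ j ∈ rb.index, ∑ m ∈ F, antipode (R := k) (rb.left j * m.2) *
            (rb.right j * m.1) := h
      _ = ∑ j ∈ rb.index, ∑ m ∈ F, antipode (R := k) m.2 *
            (antipode (R := k) (rb.left j) * (rb.right j * m.1)) := by
          refine Finset.sum_congr rfl fun j _ => Finset.sum_congr rfl fun m _ => ?_
          rw [S_mul]
          simp only [mul_assoc]
  -- u a = S² a * u
  have E6 : ∀ a : A, u * a = antipode (R := k) (antipode (R := k) a) * u := by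
    intro a
    have ra := Coalgebra.Repr.arbitrary k a
    have a1 : ∀ i, Coalgebra.Repr k (ra.left i) (A × A) := fun i => Coalgebra.Repr.arbitrary k _
    have a2 : ∀ i, Coalgebra.Repr k (ra.right i) (A × A) := fun i => Coalgebra.Repr.arbitrary k _
    have hco := Coalgebra.sum_tmul_tmul_eq ra a1 a2
    have h := congrArg (fun z => ((T3map (antipode (R := k) ∘ₗ antipode (R := k))
        (antipode (R := k)) (LinearMap.mulLeft k u)) ∘ₗ
      LinearMap.lTensor A (TensorProduct.comm k A A).toLinearMap ∘ₗ
      ((TensorProduct.assoc k A A A).toLinearMap ∘ₗ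
        (TensorProduct.comm k A (A ⊗[k] A)).toLinearMap) ∘ₗ
      ((TensorProduct.assoc k A A A).toLinearMap ∘ₗ
        (TensorProduct.comm k A (A ⊗[k] A)).toLinearMap) : A ⊗[k] (A ⊗[k] A) →ₗ[k] A) z) hco
    simp only [map_sum, LinearMap.coe_comp, LinearEquiv.coe_coe, Function.comp_apply,
      TensorProduct.comm_tmul, TensorProduct.assoc_tmul, LinearMap.lTensor_tmul, T3map_tmul,
      LinearMap.mulLeft_apply] at h
    have hER : (∑ i ∈ ra.index, ∑ j ∈ (a2 i).index,
        antipode (R := k) (antipode (R := k) ((a2 i).right j)) *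
          (antipode (R := k) ((a2 i).left j) * (u * ra.left i)))
        = u * a := by
      calc (∑ i ∈ ra.index, ∑ j ∈ (a2 i).index,
          antipode (R := k) (antipode (R := k) ((a2 i).right j)) *
            (antipode (R := k) ((a2 i).left j) * (u * ra.left i)))
          = ∑ i ∈ ra.index, Coalgebra.counit (R := k) (ra.right i) • (u * ra.left i) := by
            refine Finset.sum_congr rfl fun i _ => ?_
            calc (∑ j ∈ (a2 i).index,
                antipode (R := k) (antipode (R := k) ((a2 i).right j)) *
                  (antipode (R := k) ((a2 i).left j) * (u * ra.left i)))
                = (∑ j ∈ (a2 i).index, antipode (R := k)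
                    ((a2 i).left j * antipode (R := k) ((a2 i).right j))) * (u * ra.left i) := by
                  rw [Finset.sum_mul]
                  exact Finset.sum_congr rfl fun j _ => by
                    rw [S_mul]; simp only [mul_assoc]
              _ = Coalgebra.counit (R := k) (ra.right i) • (u * ra.left i) := by
                  have hmap : antipode (R := k) (∑ j ∈ (a2 i).index,
                      (a2 i).left j * antipode (R := k) ((a2 i).right j))
                    = ∑ j ∈ (a2 i).index, antipode (R := k)
                      ((a2 i).left j * antipode (R := k) ((a2 i).right j)) := map_sum _ _ _
                  rw [← hmap, sum_mul_antipode_eq_smul (a2 i), map_smul, S_one,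
                    smul_mul_assoc, one_mul]
        _ = u * (∑ i ∈ ra.index, Coalgebra.counit (R := k) (ra.right i) • ra.left i) := by
            rw [Finset.mul_sum]
            exact Finset.sum_congr rfl fun i _ => by rw [mul_smul_comm]
        _ = u * a := by rw [cR' ra]
    have hEL : (∑ i ∈ ra.index, ∑ j ∈ (a1 i).index,
        antipode (R := k) (antipode (R := k) (ra.right i)) *
          (antipode (R := k) ((a1 i).right j) * (u * (a1 i).left j)))
        = antipode (R := k) (antipode (R := k) a) * u := by
      calc (∑ i ∈ ra.index, ∑ j ∈ (a1 i).index,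
          antipode (R := k) (antipode (R := k) (ra.right i)) *
            (antipode (R := k) ((a1 i).right j) * (u * (a1 i).left j)))
          = ∑ i ∈ ra.index, antipode (R := k) (antipode (R := k) (ra.right i)) *
              (Coalgebra.counit (R := k) (ra.left i) • u) := by
            refine Finset.sum_congr rfl fun i _ => ?_
            rw [← Finset.mul_sum]
            refine congrArg _ ?_
            rw [hstar (ra.left i) (a1 i), Finset.sum_comm]
            calc (∑ m ∈ F, ∑ j ∈ (a1 i).index, antipode (R := k) m.2 *
                  (antipode (R := k) ((a1 i).left j) * ((a1 i).right j * m.1)))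
                = ∑ m ∈ F, Coalgebra.counit (R := k) (ra.left i) •
                    (antipode (R := k) m.2 * m.1) := by
                  refine Finset.sum_congr rfl fun m _ => ?_
                  rw [← Finset.mul_sum, hopf1 (a1 i) m.1, mul_smul_comm]
              _ = Coalgebra.counit (R := k) (ra.left i) •
                    (∑ m ∈ F, antipode (R := k) m.2 * m.1) := by
                  rw [Finset.smul_sum]
              _ = Coalgebra.counit (R := k) (ra.left i) • u := by rw [← husum]
        _ = (∑ i ∈ ra.index, Coalgebra.counit (R := k) (ra.left i) •
              antipode (R := k) (antipode (R := k) (ra.right i))) * u := by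
            rw [Finset.sum_mul]
            exact Finset.sum_congr rfl fun i _ => by rw [mul_smul_comm, smul_mul_assoc]
        _ = antipode (R := k) (antipode (R := k) a) * u := by
            refine congrArg (· * u) ?_
            have h2 : antipode (R := k) (antipode (R := k)
                (∑ i ∈ ra.index, Coalgebra.counit (R := k) (ra.left i) • ra.right i))
                = antipode (R := k) (antipode (R := k) a) := by rw [cL' ra]
            rw [map_sum, map_sum] at h2
            simp only [map_smul] at h2
            exact h2
    rw [hER, hEL] at h
    exact h.symm
  -- relation (C)
  have C : (∑ m ∈ F, antipode (R := k) (antipode (R := k) m.2) *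
      (u * antipode (R := k) (antipode (R := k) m.1))) = 1 := by
    have h := congrArg (fun z => ((LinearMap.mul' k A) ∘ₗ
      TensorProduct.map (antipode (R := k)) (LinearMap.mulLeft k u ∘ₗ antipode (R := k)) ∘ₗ
      (TensorProduct.comm k A A).toLinearMap : A ⊗[k] A →ₗ[k] A) z) E5
    rw [hF] at h
    simp only [map_sum, LinearMap.coe_comp, LinearEquiv.coe_coe, Function.comp_apply,
      TensorProduct.comm_tmul, TensorProduct.map_tmul, LinearMap.mul'_apply,
      LinearMap.mulLeft_apply] at h
    rw [h]
    exact B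
  -- w u = 1
  have E7 : w * u = 1 := by
    have h := congrArg (fun z => ((T3map LinearMap.id (antipode (R := k)) LinearMap.id) ∘ₗ
      ((TensorProduct.assoc k A A A).toLinearMap ∘ₗ
        (TensorProduct.comm k A (A ⊗[k] A)).toLinearMap) : A ⊗[k] (A ⊗[k] A) →ₗ[k] A) z) H2
    simp only [map_sum, LinearMap.coe_comp, LinearEquiv.coe_coe, Function.comp_apply,
      TensorProduct.comm_tmul, TensorProduct.assoc_tmul, T3map_tmul,
      LinearMap.id_coe, id_eq] at h
    -- h : Σ_m Σ_j l j * (S (r j) * m.1) = Σ_m Σ_n n.2 * (S m.2 * (m.1 * n.1))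
    have hL2 : (∑ m ∈ F, ∑ j ∈ (rt m).index,
        (rt m).left j * (antipode (R := k) ((rt m).right j) * m.1)) = 1 := by
      calc (∑ m ∈ F, ∑ j ∈ (rt m).index,
            (rt m).left j * (antipode (R := k) ((rt m).right j) * m.1))
          = ∑ m ∈ F, Coalgebra.counit (R := k) m.2 • m.1 := by
            exact Finset.sum_congr rfl fun m _ => hopf2 (rt m) m.1
        _ = 1 := E2
    rw [hL2] at h
    calc w * u = ∑ m ∈ F, m.2 * (antipode (R := k) (antipode (R := k) m.1) * u) := by
          rw [hwsum, Finset.sum_mul]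
          exact Finset.sum_congr rfl fun m _ => by rw [mul_assoc]
      _ = ∑ m ∈ F, m.2 * (u * m.1) := by
          exact Finset.sum_congr rfl fun m _ => by rw [← E6 m.1]
      _ = ∑ m ∈ F, ∑ n ∈ F, m.2 * (antipode (R := k) n.2 * (n.1 * m.1)) := by
          refine Finset.sum_congr rfl fun m _ => ?_
          rw [husum, Finset.sum_mul, Finset.mul_sum]
          exact Finset.sum_congr rfl fun n _ => by rw [mul_assoc]
      _ = ∑ n ∈ F, ∑ m ∈ F, m.2 * (antipode (R := k) n.2 * (n.1 * m.1)) := Finset.sum_comm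
      _ = 1 := h.symm
  -- u w = 1
  have E8 : u * w = 1 := by
    calc u * w = ∑ m ∈ F, (u * m.2) * antipode (R := k) (antipode (R := k) m.1) := by
          rw [hwsum, Finset.mul_sum]
          exact Finset.sum_congr rfl fun m _ => by rw [mul_assoc]
      _ = ∑ m ∈ F, antipode (R := k) (antipode (R := k) m.2) *
            (u * antipode (R := k) (antipode (R := k) m.1)) := by
          exact Finset.sum_congr rfl fun m _ => by rw [E6 m.2, mul_assoc]
      _ = 1 := C
  -- counit of u
  have E3 : Coalgebra.counit (R := k) u = 1 := by
    have h2 := congrArg (Coalgebra.counit (R := k)) E2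
    rw [map_sum] at h2
    simp only [map_smul, smul_eq_mul, Bialgebra.counit_one] at h2
    rw [husum, map_sum]
    calc (∑ m ∈ F, Coalgebra.counit (R := k) (antipode (R := k) m.2 * m.1))
        = ∑ m ∈ F, Coalgebra.counit (R := k) m.2 * Coalgebra.counit (R := k) m.1 := by
          refine Finset.sum_congr rfl fun m _ => ?_
          rw [Bialgebra.counit_mul, counit_S]
      _ = 1 := h2
  refine ⟨w, ?_, ?_, ?_, ?_, ?_⟩
  · rw [hu, ← husum]; exact E8
  · rw [hu, ← husum]; exact E7
  · rw [hw, ← hwsum]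
  · intro a
    rw [hu, ← husum]
    calc antipode (R := k) (antipode (R := k) a)
        = antipode (R := k) (antipode (R := k) a) * (u * w) := by rw [E8, mul_one]
      _ = (antipode (R := k) (antipode (R := k) a) * u) * w := by rw [mul_assoc]
      _ = (u * a) * w := by rw [← E6 a]
  · rw [hu, ← husum]; exact E3

end
end

section
/- Let n ≥ 1, ω ∈ ℂ a primitive n-th root of unity, and E_k = (1/n) ∑_{i=0}^{n-1} ω^{-ik} a^i in the group algebra ℂC_n of the cyclic group of order n generated by a. For each d ∈ {0,1,…,n-1}, the element R_d = ∑_{k,l=0}^{n-1} ω^{dkl} E_k ⊗ E_l is a universal R-matrix of the Hopf algebra ℂC_n, i.e., (ℂC_n, R_d) is quasitriangular. -/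
open TensorProduct

noncomputable section

/-- The cyclic group `C_n` of order `n`, written multiplicatively, generated by `a`. -/
abbrev Cyc (n : ℕ) := Multiplicative (ZMod n)

/-- The group algebra `ℂC_n`. -/
abbrev CCn (n : ℕ) := MonoidAlgebra ℂ (Cyc n)

/-- The generator `a` of `C_n`, viewed in `ℂC_n`. -/
def aElem (n : ℕ) : CCn n := MonoidAlgebra.of ℂ (Cyc n) (Multiplicative.ofAdd 1)

/-- The idempotent `E_k = (1/n) ∑_{i=0}^{n-1} ω^{-ik} aⁱ` of `ℂC_n`. -/
def Ee (n : ℕ) (ω : ℂ) (kk : ℤ) : CCn n :=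
  (n : ℂ)⁻¹ • ∑ i ∈ Finset.range n, ω ^ (-(i * kk : ℤ)) • aElem n ^ i

/-- The standard comultiplication of the group algebra, `Δ(g) = g ⊗ g`. -/
def comulCCn (n : ℕ) : CCn n →ₐ[ℂ] CCn n ⊗[ℂ] CCn n :=
  MonoidAlgebra.lift ℂ _ (Cyc n)
    { toFun := fun g => MonoidAlgebra.of ℂ (Cyc n) g ⊗ₜ[ℂ] MonoidAlgebra.of ℂ (Cyc n) g
      map_one' := by simp [Algebra.TensorProduct.one_def, MonoidAlgebra.one_def]
      map_mul' := by
        intro g h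
        simp [Algebra.TensorProduct.tmul_mul_tmul] }

/-- The standard counit of the group algebra, `ε(g) = 1`. -/
def counitCCn (n : ℕ) : CCn n →ₐ[ℂ] ℂ :=
  MonoidAlgebra.lift ℂ ℂ (Cyc n) 1

/-- The standard antipode of the group algebra, `S(g) = g⁻¹`. -/
def antipodeCCn (n : ℕ) : CCn n →ₐ[ℂ] CCn n :=
  MonoidAlgebra.lift ℂ _ (Cyc n)
    { toFun := fun g => MonoidAlgebra.of ℂ (Cyc n) g⁻¹
      map_one' := by simp [MonoidAlgebra.one_def]
      map_mul' := by intro g h; simp [mul_comm] }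

/-- The R-matrix `R_d = ∑_{k,l} ω^{dkl} E_k ⊗ E_l`. -/
def Rmat (n : ℕ) (ω : ℂ) (d : ℕ) : CCn n ⊗[ℂ] CCn n :=
  ∑ kk ∈ Finset.range n, ∑ l ∈ Finset.range n,
    ω ^ (d * kk * l) • (Ee n ω (kk : ℤ) ⊗ₜ[ℂ] Ee n ω (l : ℤ))

namespace RmatAux

def ee (n : ℕ) (ω : ℂ) (z : ZMod n) : ℂ := ω ^ z.val

def Ag (n : ℕ) (z : ZMod n) : CCn n :=
  MonoidAlgebra.of ℂ (Cyc n) (Multiplicative.ofAdd z)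

def Ez (n : ℕ) [NeZero n] (ω : ℂ) (z : ZMod n) : CCn n :=
  (n : ℂ)⁻¹ • ∑ g : ZMod n, ee n ω (-(g * z)) • Ag n g

variable {n : ℕ} {ω : ℂ}

theorem Ag_mul (x y : ZMod n) : Ag n x * Ag n y = Ag n (x + y) := by
  simp only [Ag, ← map_mul]
  rfl

theorem Ag_zero : Ag n (0 : ZMod n) = 1 := by
  simp only [Ag]
  exact map_one _

theorem pow_mod (hω : IsPrimitiveRoot ω n) (m : ℕ) : ω ^ (m % n) = ω ^ m := by
  conv_rhs => rw [← Nat.div_add_mod m n]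
  rw [pow_add, pow_mul, hω.pow_eq_one, one_pow, one_mul]

theorem ee_natCast (hω : IsPrimitiveRoot ω n) [NeZero n] (m : ℕ) :
    ee n ω ((m : ZMod n)) = ω ^ m := by
  rw [ee, ZMod.val_natCast, pow_mod hω]

theorem ee_add (hω : IsPrimitiveRoot ω n) [NeZero n] (x y : ZMod n) :
    ee n ω (x + y) = ee n ω x * ee n ω y := by
  rw [ee, ZMod.val_add, pow_mod hω, pow_add]; rfl

theorem ee_zero [NeZero n] : ee n ω (0 : ZMod n) = 1 := by simp [ee]

theorem omega_ne_zero (hω : IsPrimitiveRoot ω n) [NeZero n] : ω ≠ 0 :=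
  hω.ne_zero (NeZero.ne n)

theorem zpow_congr (hω : IsPrimitiveRoot ω n) [NeZero n] {a b : ℤ}
    (h : a % n = b % n) : ω ^ a = ω ^ b := by
  have hne : ω ≠ 0 := omega_ne_zero hω
  obtain ⟨k, hk⟩ : (n : ℤ) ∣ (a - b) := Int.ModEq.dvd (Int.ModEq.symm h)
  have : a = b + n * k := by linarith
  rw [this, zpow_add₀ hne, zpow_mul, zpow_natCast, hω.pow_eq_one, one_zpow, mul_one]

theorem ee_intCast (hω : IsPrimitiveRoot ω n) [NeZero n] (m : ℤ) :
    ee n ω ((m : ZMod n)) = ω ^ m := by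
  rw [ee, ← zpow_natCast]
  exact zpow_congr hω (by rw [ZMod.val_intCast]; simp [Int.emod_emod_of_dvd])

variable {n : ℕ} {ω : ℂ}

theorem sum_range_eq_sum_zmod [NeZero n] {M : Type*} [AddCommMonoid M] (f : ZMod n → M) :
    ∑ i ∈ Finset.range n, f (i : ZMod n) = ∑ z : ZMod n, f z := by
  refine Finset.sum_nbij' (fun i => ((i : ZMod n))) (fun z => z.val) ?_ ?_ ?_ ?_ ?_
  · intro i _; exact Finset.mem_univ _
  · intro z _; exact Finset.mem_range.mpr (ZMod.val_lt z)
  · intro i hi; exact ZMod.val_natCast_of_lt (Finset.mem_range.mp hi)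
  · intro z _; simp [ZMod.natCast_val, ZMod.cast_id]
  · intro i _; rfl

theorem charSum (hω : IsPrimitiveRoot ω n) [NeZero n] (w : ZMod n) :
    ∑ z : ZMod n, ee n ω (z * w) = if w = 0 then (n : ℂ) else 0 := by
  rw [← sum_range_eq_sum_zmod (fun z => ee n ω (z * w))]
  have : ∀ i : ℕ, ee n ω ((i : ZMod n) * w) = (ω ^ w.val) ^ i := by
    intro i
    have : ((i : ZMod n)) * w = ((i * w.val : ℕ) : ZMod n) := by push_cast; simp [ZMod.natCast_val, ZMod.cast_id]
    rw [this, ee_natCast hω]; rw [← pow_mul, Nat.mul_comm, pow_mul]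
  simp only [this]
  split_ifs with hw
  · subst hw; simp [ZMod.val_zero]
  · have hval : 0 < w.val := by
      rcases Nat.eq_zero_or_pos w.val with h | h
      · exact absurd (by rwa [← ZMod.val_eq_zero]) hw
      · exact h
    have hne1 : ω ^ w.val ≠ 1 := hω.pow_ne_one_of_pos_of_lt hval.ne' (ZMod.val_lt w)
    rw [geom_sum_eq hne1, ← pow_mul, mul_comm, pow_mul, hω.pow_eq_one, one_pow]
    simp

theorem aElem_pow (i : ℕ) : aElem n ^ i = Ag n ((i : ZMod n)) := by
  rw [aElem, Ag, ← map_pow]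
  congr 1
  rw [← ofAdd_nsmul]
  congr 1
  simp

theorem Ee_eq_Ez (hω : IsPrimitiveRoot ω n) [NeZero n] (kk : ℤ) :
    Ee n ω kk = Ez n ω ((kk : ZMod n)) := by
  rw [Ee, Ez]
  congr 1
  rw [← sum_range_eq_sum_zmod (fun z => ee n ω (-(z * (kk : ZMod n))) • Ag n z)]
  refine Finset.sum_congr rfl fun i _ => ?_
  rw [aElem_pow]
  congr 1
  rw [← ee_intCast hω (-(i * kk))]
  congr 1
  push_cast
  ring

variable {n : ℕ} {ω : ℂ}

theorem n_ne_zero [NeZero n] : (n : ℂ) ≠ 0 := Nat.cast_ne_zero.mpr (NeZero.ne n)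

theorem Ez_mul_Ez (hω : IsPrimitiveRoot ω n) [NeZero n] (y z : ZMod n) :
    Ez n ω y * Ez n ω z = if y = z then Ez n ω y else 0 := by
  have expand : Ez n ω y * Ez n ω z
      = ((n:ℂ)⁻¹ * (n:ℂ)⁻¹) • ∑ g : ZMod n, ∑ h : ZMod n,
          (ee n ω (-(g * y)) * ee n ω (-(h * z))) • Ag n (g + h) := by
    rw [Ez, Ez, smul_mul_smul_comm, Finset.sum_mul_sum]
    congr 1
    refine Finset.sum_congr rfl fun g _ => Finset.sum_congr rfl fun h _ => ?_
    rw [smul_mul_smul_comm, Ag_mul]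
  rw [expand]
  have reindex : ∀ g : ZMod n, ∑ h : ZMod n,
      (ee n ω (-(g * y)) * ee n ω (-(h * z))) • Ag n (g + h)
      = ∑ w : ZMod n, (ee n ω (-(w * z)) * ee n ω (g * (z - y))) • Ag n w := by
    intro g
    refine Fintype.sum_equiv (Equiv.addLeft g) _ _ fun h => ?_
    simp only [Equiv.coe_addLeft]
    congr 1
    rw [← ee_add hω, ← ee_add hω]
    congr 1
    ring
  simp only [reindex]
  rw [Finset.sum_comm]
  have collapse : ∀ w : ZMod n,
      ∑ g : ZMod n, (ee n ω (-(w * z)) * ee n ω (g * (z - y))) • Ag n w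
      = (ee n ω (-(w * z)) * (if z - y = 0 then (n:ℂ) else 0)) • Ag n w := by
    intro w
    rw [← Finset.sum_smul, ← Finset.mul_sum, charSum hω]
  simp only [collapse]
  by_cases hyz : y = z
  · subst hyz
    rw [if_pos rfl, Ez, Finset.smul_sum, Finset.smul_sum]
    refine Finset.sum_congr rfl fun w _ => ?_
    rw [sub_self, if_pos rfl, smul_smul, smul_smul]
    have hn0 : (n:ℂ) ≠ 0 := n_ne_zero
    congr 1
    field_simp
  · rw [if_neg hyz, if_neg (sub_ne_zero_of_ne (Ne.symm hyz))]
    simp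

variable {n : ℕ} {ω : ℂ}

theorem sum_Ez (hω : IsPrimitiveRoot ω n) [NeZero n] :
    ∑ z : ZMod n, Ez n ω z = 1 := by
  simp only [Ez, ← Finset.smul_sum]
  rw [Finset.sum_comm]
  have : ∀ g : ZMod n, ∑ z : ZMod n, ee n ω (-(g * z)) • Ag n g
      = (if -g = 0 then (n:ℂ) else 0) • Ag n g := by
    intro g
    rw [← Finset.sum_smul, ← charSum hω (-g)]
    congr 1
    refine Finset.sum_congr rfl fun z _ => ?_
    congr 1
    ring
  simp only [this, neg_eq_zero, ite_smul, zero_smul]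
  rw [Finset.sum_ite_eq' Finset.univ (0 : ZMod n) (fun g => (n:ℂ) • Ag n g)]
  simp [Ag_zero, smul_smul, n_ne_zero (n := n)]

theorem comul_Ag (z : ZMod n) :
    comulCCn n (Ag n z) = Ag n z ⊗ₜ[ℂ] Ag n z := by
  rw [Ag, comulCCn, MonoidAlgebra.lift_of]
  rfl

theorem comul_Ez (hω : IsPrimitiveRoot ω n) [NeZero n] (m : ZMod n) :
    comulCCn n (Ez n ω m) = ∑ k : ZMod n, Ez n ω k ⊗ₜ[ℂ] Ez n ω (m - k) := by
  have lhs : comulCCn n (Ez n ω m)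
      = (n:ℂ)⁻¹ • ∑ g : ZMod n, ee n ω (-(g * m)) • (Ag n g ⊗ₜ[ℂ] Ag n g) := by
    rw [Ez, map_smul, map_sum]
    congr 1
    refine Finset.sum_congr rfl fun g _ => ?_
    rw [map_smul, comul_Ag]
  rw [lhs]
  have rhs : ∀ k : ZMod n, Ez n ω k ⊗ₜ[ℂ] Ez n ω (m - k)
      = ((n:ℂ)⁻¹ * (n:ℂ)⁻¹) • ∑ g : ZMod n, ∑ h : ZMod n,
          (ee n ω (-(g * k)) * ee n ω (-(h * (m - k)))) • (Ag n g ⊗ₜ[ℂ] Ag n h) := by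
    intro k
    rw [Ez, Ez, TensorProduct.smul_tmul_smul]
    congr 1
    rw [TensorProduct.sum_tmul]
    refine Finset.sum_congr rfl fun g _ => ?_
    rw [TensorProduct.tmul_sum]
    refine Finset.sum_congr rfl fun h _ => ?_
    rw [TensorProduct.smul_tmul_smul]
  simp only [rhs]
  rw [← Finset.smul_sum, Finset.sum_comm]
  have swap2 : ∀ g : ZMod n, ∑ k : ZMod n, ∑ h : ZMod n,
      (ee n ω (-(g * k)) * ee n ω (-(h * (m - k)))) • (Ag n g ⊗ₜ[ℂ] Ag n h)
      = ∑ h : ZMod n, (ee n ω (-(h * m)) * (if h - g = 0 then (n:ℂ) else 0)) • (Ag n g ⊗ₜ[ℂ] Ag n h) := by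
    intro g
    rw [Finset.sum_comm]
    refine Finset.sum_congr rfl fun h _ => ?_
    rw [← Finset.sum_smul]
    congr 1
    rw [← charSum hω (h - g), Finset.mul_sum]
    refine Finset.sum_congr rfl fun k _ => ?_
    rw [← ee_add hω, ← ee_add hω]
    congr 1
    ring
  simp only [swap2, sub_eq_zero]
  have : ∀ g : ZMod n, ∑ h : ZMod n,
      (ee n ω (-(h * m)) * (if h = g then (n:ℂ) else 0)) • (Ag n g ⊗ₜ[ℂ] Ag n h)
      = (ee n ω (-(g * m)) * (n:ℂ)) • (Ag n g ⊗ₜ[ℂ] Ag n g) := by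
    intro g
    rw [Finset.sum_eq_single g]
    · rw [if_pos rfl]
    · intro h _ hne; rw [if_neg hne, mul_zero, zero_smul]
    · intro habs; exact absurd (Finset.mem_univ g) habs
  simp only [this]
  rw [Finset.smul_sum, Finset.smul_sum]
  refine Finset.sum_congr rfl fun g _ => ?_
  rw [smul_smul, smul_smul]
  congr 1
  have hn0 : (n:ℂ) ≠ 0 := n_ne_zero
  field_simp

variable {n : ℕ} {ω : ℂ}

def cc (n : ℕ) (ω : ℂ) (d : ℕ) (k l : ZMod n) : ℂ := ee n ω ((d : ZMod n) * k * l)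

theorem cc_add_left (hω : IsPrimitiveRoot ω n) [NeZero n] (d : ℕ) (k k' l : ZMod n) :
    cc n ω d (k + k') l = cc n ω d k l * cc n ω d k' l := by
  rw [cc, cc, cc, ← ee_add hω]
  congr 1
  ring

theorem cc_add_right (hω : IsPrimitiveRoot ω n) [NeZero n] (d : ℕ) (k l l' : ZMod n) :
    cc n ω d k (l + l') = cc n ω d k l * cc n ω d k l' := by
  rw [cc, cc, cc, ← ee_add hω]
  congr 1
  ring

theorem Rmat_eq (hω : IsPrimitiveRoot ω n) [NeZero n] (d : ℕ) :
    Rmat n ω d = ∑ k : ZMod n, ∑ l : ZMod n,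
      cc n ω d k l • (Ez n ω k ⊗ₜ[ℂ] Ez n ω l) := by
  rw [Rmat, ← sum_range_eq_sum_zmod
    (fun k => ∑ l : ZMod n, cc n ω d k l • (Ez n ω k ⊗ₜ[ℂ] Ez n ω l))]
  refine Finset.sum_congr rfl fun kk _ => ?_
  rw [← sum_range_eq_sum_zmod
    (fun l => cc n ω d (kk : ZMod n) l • (Ez n ω (kk : ZMod n) ⊗ₜ[ℂ] Ez n ω l))]
  refine Finset.sum_congr rfl fun l _ => ?_
  have hc : ω ^ (d * kk * l) = cc n ω d (kk : ZMod n) (l : ZMod n) := by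
    rw [cc, ← ee_natCast hω (d * kk * l)]
    congr 1
    push_cast
    ring
  have hE : ∀ m : ℕ, Ee n ω (m : ℤ) = Ez n ω ((m : ZMod n)) := by
    intro m
    rw [Ee_eq_Ez hω]
    congr 1
    push_cast
    ring
  rw [hc, hE, hE]

theorem mulE (hω : IsPrimitiveRoot ω n) [NeZero n] (f g : ZMod n → ZMod n → ℂ) :
    (∑ k : ZMod n, ∑ l : ZMod n, f k l • (Ez n ω k ⊗ₜ[ℂ] Ez n ω l)) *
      (∑ k : ZMod n, ∑ l : ZMod n, g k l • (Ez n ω k ⊗ₜ[ℂ] Ez n ω l))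
      = ∑ k : ZMod n, ∑ l : ZMod n, (f k l * g k l) • (Ez n ω k ⊗ₜ[ℂ] Ez n ω l) := by
  simp only [Finset.sum_mul, Finset.mul_sum, smul_mul_smul_comm,
    Algebra.TensorProduct.tmul_mul_tmul, Ez_mul_Ez hω,
    TensorProduct.ite_tmul, TensorProduct.tmul_ite, smul_ite, smul_zero,
    Finset.sum_ite_eq, Finset.sum_ite_eq', Finset.mem_univ, if_true]

theorem sum3_rot {M : Type*} [AddCommMonoid M] {α : Type*} [Fintype α]
    (g : α → α → α → M) :
    ∑ a : α, ∑ b : α, ∑ c : α, g a b c = ∑ c : α, ∑ a : α, ∑ b : α, g a b c :=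
  calc ∑ a : α, ∑ b : α, ∑ c : α, g a b c
      = ∑ a : α, ∑ c : α, ∑ b : α, g a b c :=
        Finset.sum_congr rfl fun a _ => Finset.sum_comm
    _ = ∑ c : α, ∑ a : α, ∑ b : α, g a b c := Finset.sum_comm

theorem comm_comul (x : CCn n) :
    (TensorProduct.comm ℂ (CCn n) (CCn n)) (comulCCn n x) = comulCCn n x := by
  induction x using MonoidAlgebra.induction_on with
  | of g =>
    rw [show MonoidAlgebra.of ℂ (Cyc n) g = Ag n (Multiplicative.toAdd g) from rfl,
      comul_Ag, TensorProduct.comm_tmul]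
  | add f g hf hg => rw [map_add, map_add, hf, hg]
  | smul r f hf => rw [map_smul, map_smul, hf]

end RmatAux

/-- `R_d` is a universal R-matrix of `ℂC_n`: it is invertible and satisfies
`(Δ ⊗ id)(R) = R₁₃R₂₃`, `(id ⊗ Δ)(R) = R₁₃R₁₂`, and `R Δ(x) = Δᵒᵖ(x) R`. -/
theorem Rmat_is_universal_RMatrix (n : ℕ) (hn : 1 ≤ n) (ω : ℂ)
    (hω : IsPrimitiveRoot ω n) (d : ℕ) (hd : d < n) :
    IsUnit (Rmat n ω d) ∧
    (TensorProduct.assoc ℂ (CCn n) (CCn n) (CCn n))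
        (LinearMap.rTensor (CCn n) (comulCCn n).toLinearMap (Rmat n ω d))
      = (Algebra.TensorProduct.map (AlgHom.id ℂ (CCn n))
            Algebra.TensorProduct.includeRight) (Rmat n ω d)
        * (Algebra.TensorProduct.includeRight
            (R := ℂ) (A := CCn n)) (Rmat n ω d) ∧
    LinearMap.lTensor (CCn n) (comulCCn n).toLinearMap (Rmat n ω d)
      = (Algebra.TensorProduct.map (AlgHom.id ℂ (CCn n))
            Algebra.TensorProduct.includeRight) (Rmat n ω d)
        * (Algebra.TensorProduct.map (AlgHom.id ℂ (CCn n))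
            Algebra.TensorProduct.includeLeft) (Rmat n ω d) ∧
    ∀ x : CCn n, Rmat n ω d * comulCCn n x
        = (TensorProduct.comm ℂ (CCn n) (CCn n)) (comulCCn n x) * Rmat n ω d := by
  haveI : NeZero n := ⟨by omega⟩
  have hRe := RmatAux.Rmat_eq (ω := ω) hω d
  open RmatAux in
  refine ⟨?_, ?_, ?_, ?_⟩
  · refine IsUnit.of_mul_eq_one
      (∑ k : ZMod n, ∑ l : ZMod n,
        ee n ω (-((d : ZMod n) * k * l)) • (Ez n ω k ⊗ₜ[ℂ] Ez n ω l)) ?_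
    rw [hRe, mulE hω]
    have hone : ∀ k l : ZMod n,
        cc n ω d k l * ee n ω (-((d : ZMod n) * k * l)) = 1 := by
      intro k l
      rw [cc, ← ee_add hω, add_neg_cancel, ee_zero]
    simp only [hone, one_smul]
    calc ∑ k : ZMod n, ∑ l : ZMod n, Ez n ω k ⊗ₜ[ℂ] Ez n ω l
        = (∑ k : ZMod n, Ez n ω k) ⊗ₜ[ℂ] (∑ l : ZMod n, Ez n ω l) := by
          rw [TensorProduct.sum_tmul]
          exact Finset.sum_congr rfl fun k _ => (TensorProduct.tmul_sum _ _ _).symm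
      _ = 1 := by rw [sum_Ez hω, Algebra.TensorProduct.one_def]
  · have lhs2 : (TensorProduct.assoc ℂ (CCn n) (CCn n) (CCn n))
        (LinearMap.rTensor (CCn n) (comulCCn n).toLinearMap (Rmat n ω d))
        = ∑ k : ZMod n, ∑ l : ZMod n, ∑ p : ZMod n,
            cc n ω d k l • (Ez n ω p ⊗ₜ[ℂ] (Ez n ω (k - p) ⊗ₜ[ℂ] Ez n ω l)) := by
      rw [hRe]
      set_option synthInstance.maxHeartbeats 1000000 in
      simp only [map_sum, map_smul, LinearMap.rTensor_tmul, AlgHom.toLinearMap_apply,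
        comul_Ez hω, TensorProduct.sum_tmul, TensorProduct.assoc_tmul, Finset.smul_sum]
    have rhs2 : (Algebra.TensorProduct.map (AlgHom.id ℂ (CCn n))
            Algebra.TensorProduct.includeRight) (Rmat n ω d)
        * (Algebra.TensorProduct.includeRight (R := ℂ) (A := CCn n)) (Rmat n ω d)
        = ∑ q : ZMod n, ∑ l : ZMod n, ∑ k : ZMod n,
            (cc n ω d k l * cc n ω d q l) •
              (Ez n ω k ⊗ₜ[ℂ] (Ez n ω q ⊗ₜ[ℂ] Ez n ω l)) := by
      rw [hRe]
      simp only [map_sum, map_smul, Algebra.TensorProduct.map_tmul, AlgHom.coe_id, id_eq,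
        Algebra.TensorProduct.includeRight_apply, Finset.sum_mul, Finset.mul_sum,
        smul_mul_smul_comm, Algebra.TensorProduct.tmul_mul_tmul, one_mul, mul_one,
        Ez_mul_Ez hω, TensorProduct.tmul_ite, TensorProduct.ite_tmul, smul_ite, smul_zero,
        Finset.sum_ite_irrel, Finset.sum_const_zero,
        Finset.sum_ite_eq, Finset.sum_ite_eq', Finset.mem_univ, if_true]
    rw [lhs2, rhs2]
    rw [show (∑ q : ZMod n, ∑ l : ZMod n, ∑ k : ZMod n,
            (cc n ω d k l * cc n ω d q l) •
              (Ez n ω k ⊗ₜ[ℂ] (Ez n ω q ⊗ₜ[ℂ] Ez n ω l)))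
        = ∑ k : ZMod n, ∑ q : ZMod n, ∑ l : ZMod n,
            (cc n ω d k l * cc n ω d q l) •
              (Ez n ω k ⊗ₜ[ℂ] (Ez n ω q ⊗ₜ[ℂ] Ez n ω l)) from sum3_rot _]
    have swapA : ∀ k : ZMod n,
        (∑ l : ZMod n, ∑ p : ZMod n,
          cc n ω d k l • (Ez n ω p ⊗ₜ[ℂ] (Ez n ω (k - p) ⊗ₜ[ℂ] Ez n ω l)))
        = ∑ p : ZMod n, ∑ l : ZMod n,
          cc n ω d k l • (Ez n ω p ⊗ₜ[ℂ] (Ez n ω (k - p) ⊗ₜ[ℂ] Ez n ω l)) :=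
      fun k => Finset.sum_comm
    simp only [swapA]
    rw [Finset.sum_comm]
    refine Finset.sum_congr rfl fun p _ => ?_
    refine (Fintype.sum_equiv (Equiv.addLeft p) _ _ fun q => ?_).symm
    simp only [Equiv.coe_addLeft]
    refine Finset.sum_congr rfl fun l _ => ?_
    rw [add_sub_cancel_left, cc_add_left hω]
  · have lhs3 : LinearMap.lTensor (CCn n) (comulCCn n).toLinearMap (Rmat n ω d)
        = ∑ k : ZMod n, ∑ l : ZMod n, ∑ p : ZMod n,
            cc n ω d k l • (Ez n ω k ⊗ₜ[ℂ] (Ez n ω p ⊗ₜ[ℂ] Ez n ω (l - p))) := by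
      rw [hRe]
      simp only [map_sum, map_smul, LinearMap.lTensor_tmul, AlgHom.toLinearMap_apply,
        comul_Ez hω, TensorProduct.tmul_sum, Finset.smul_sum]
    have hA : (Algebra.TensorProduct.map (AlgHom.id ℂ (CCn n))
            Algebra.TensorProduct.includeRight) (Rmat n ω d)
        = ∑ k : ZMod n, ∑ l : ZMod n,
            cc n ω d k l • (Ez n ω k ⊗ₜ[ℂ] ((1 : CCn n) ⊗ₜ[ℂ] Ez n ω l)) := by
      rw [hRe]
      simp only [map_sum, map_smul, Algebra.TensorProduct.map_tmul, AlgHom.coe_id, id_eq,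
        Algebra.TensorProduct.includeRight_apply]
    have hB : (Algebra.TensorProduct.map (AlgHom.id ℂ (CCn n))
            Algebra.TensorProduct.includeLeft) (Rmat n ω d)
        = ∑ l : ZMod n, ∑ k : ZMod n,
            cc n ω d k l • (Ez n ω k ⊗ₜ[ℂ] (Ez n ω l ⊗ₜ[ℂ] (1 : CCn n))) := by
      rw [hRe]
      simp only [map_sum, map_smul, Algebra.TensorProduct.map_tmul, AlgHom.coe_id, id_eq,
        Algebra.TensorProduct.includeLeft_apply]
      exact Finset.sum_comm
    rw [lhs3, hA, hB]
    simp only [Finset.sum_mul, Finset.mul_sum, smul_mul_smul_comm,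
      Algebra.TensorProduct.tmul_mul_tmul, one_mul, mul_one,
      Ez_mul_Ez hω, TensorProduct.tmul_ite, TensorProduct.ite_tmul, smul_ite, smul_zero,
      Finset.sum_ite_irrel, Finset.sum_const_zero,
      Finset.sum_ite_eq, Finset.sum_ite_eq', Finset.mem_univ, if_true]
    conv_rhs => rw [Finset.sum_comm]
    refine Finset.sum_congr rfl fun k _ => ?_
    conv_lhs => rw [Finset.sum_comm]
    refine Finset.sum_congr rfl fun p _ => ?_
    refine (Fintype.sum_equiv (Equiv.addLeft p) _ _ fun q => ?_).symm
    simp only [Equiv.coe_addLeft]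
    rw [add_sub_cancel_left, cc_add_right hω, mul_comm]
  · intro x
    have hcomm := comm_comul (n := n) x
    rw [hcomm, mul_comm]

end
end

section
/- Let n ≥ 1, ω ∈ ℂ a primitive n-th root of unity, and consider the quasitriangular Hopf algebra (ℂC_n, R_d) with R_d = ∑_{k,l=0}^{n-1} ω^{dkl} E_k ⊗ E_l, where E_k = (1/n) ∑_{i=0}^{n-1} ω^{-ik} a^i. Then the Drinfeld element of (ℂC_n, R_d) is u_d = ∑_{k=0}^{n-1} ω^{-dk²} E_k. -/
open TensorProduct

noncomputable section

/-- The Drinfeld element `u = ∑ S(R⁽²⁾) R⁽¹⁾` of `(ℂC_n, R_d)`. -/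
def drinfeldCCn (n : ℕ) (ω : ℂ) (d : ℕ) : CCn n :=
  LinearMap.mul' ℂ (CCn n)
    (LinearMap.rTensor (CCn n) (antipodeCCn n).toLinearMap
      ((TensorProduct.comm ℂ (CCn n) (CCn n)) (Rmat n ω d)))


section DrinfeldAux

lemma zpow_congr {n : ℕ} {ω : ℂ} (hne : ω ≠ 0) (hone : ω ^ (n:ℤ) = 1)
    {a b : ℤ} (h : (n:ℤ) ∣ a - b) : ω ^ a = ω ^ b := by
  obtain ⟨t, ht⟩ := h
  have : a = b + n * t := by linarith
  rw [this, zpow_add₀ hne, zpow_mul, hone, one_zpow, mul_one]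

lemma val_modeq {n : ℕ} [NeZero n] (m : ℤ) :
    (n:ℤ) ∣ (((m : ZMod n).val : ℤ) - m) := by
  rw [← ZMod.intCast_zmod_eq_zero_iff_dvd]
  push_cast
  simp [ZMod.natCast_val, ZMod.intCast_cast, ZMod.cast_id]

lemma sum_omega_zpow {n : ℕ} {ω : ℂ} (hn : n ≠ 0) (hω : IsPrimitiveRoot ω n) (c : ℤ) :
    ∑ i ∈ Finset.range n, ω ^ ((i : ℤ) * c) = if (n:ℤ) ∣ c then (n : ℂ) else 0 := by
  have hne : ω ≠ 0 := hω.ne_zero hn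
  have h1 : ∀ i : ℕ, ω ^ ((i:ℤ) * c) = (ω ^ c) ^ i := fun i => by
    rw [mul_comm, zpow_mul, zpow_natCast]
  rw [Finset.sum_congr rfl (fun i _ => h1 i)]
  split_ifs with h
  · have : ω ^ c = 1 := (hω.zpow_eq_one_iff_dvd c).mpr h
    simp [this]
  · have hzc : ω ^ c ≠ 1 := fun hh => h ((hω.zpow_eq_one_iff_dvd c).mp hh)
    rw [geom_sum_eq hzc]
    have h2 : (ω ^ c) ^ n = 1 := by
      rw [← zpow_natCast, ← zpow_mul, mul_comm, zpow_mul, zpow_natCast, hω.pow_eq_one, one_zpow]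
    simp [h2]

def chi (n : ℕ) [NeZero n] (ω : ℂ) (hne : ω ≠ 0) (hone : ω ^ (n:ℤ) = 1) (j : ℤ) :
    Cyc n →* ℂ where
  toFun g := ω ^ (j * ((Multiplicative.toAdd g).val : ℤ))
  map_one' := by simp
  map_mul' x y := by
    simp only [toAdd_mul]
    rw [← zpow_add₀ hne]
    apply zpow_congr hne hone
    have h1 : (n:ℤ) ∣ (((Multiplicative.toAdd x + Multiplicative.toAdd y).val : ℤ)
        - ((Multiplicative.toAdd x).val + (Multiplicative.toAdd y).val)) := by
      rw [ZMod.val_add]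
      exact ⟨-(((Multiplicative.toAdd x).val + (Multiplicative.toAdd y).val) / n), by
        push_cast [Int.emod_def]; ring⟩
    calc (n:ℤ) ∣ j * (((Multiplicative.toAdd x + Multiplicative.toAdd y).val : ℤ)
        - ((Multiplicative.toAdd x).val + (Multiplicative.toAdd y).val)) := Dvd.dvd.mul_left h1 j
      _ = _ := by ring

def phi (n : ℕ) [NeZero n] (ω : ℂ) (hne : ω ≠ 0) (hone : ω ^ (n:ℤ) = 1) (j : ℤ) :
    CCn n →ₐ[ℂ] ℂ :=
  MonoidAlgebra.lift ℂ ℂ (Cyc n) (chi n ω hne hone j)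

variable {n : ℕ} [NeZero n] {ω : ℂ} (hne : ω ≠ 0) (hone : ω ^ (n:ℤ) = 1)

lemma phi_of (j : ℤ) (m : ℤ) :
    phi n ω hne hone j (MonoidAlgebra.of ℂ (Cyc n) (Multiplicative.ofAdd (m : ZMod n)))
      = ω ^ (j * m) := by
  rw [phi, MonoidAlgebra.lift_of]
  show ω ^ (j * (((m : ZMod n)).val : ℤ)) = ω ^ (j * m)
  apply zpow_congr hne hone
  have := val_modeq (n := n) m
  calc (n:ℤ) ∣ j * (((m : ZMod n).val : ℤ) - m) := Dvd.dvd.mul_left this j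
    _ = _ := by ring

lemma phi_aElem_pow (j : ℤ) (i : ℕ) :
    phi n ω hne hone j (aElem n ^ i) = ω ^ (j * i) := by
  have : aElem n ^ i = MonoidAlgebra.of ℂ (Cyc n) (Multiplicative.ofAdd ((i : ℤ) : ZMod n)) := by
    rw [aElem, ← map_pow]
    congr 1
    rw [← ofAdd_nsmul]
    push_cast
    simp
  rw [this, phi_of]

lemma phi_anti_aElem_pow (j : ℤ) (i : ℕ) :
    phi n ω hne hone j (antipodeCCn n (aElem n ^ i)) = ω ^ (-(j * i)) := by
  have : antipodeCCn n (aElem n ^ i)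
      = MonoidAlgebra.of ℂ (Cyc n) (Multiplicative.ofAdd ((-i : ℤ) : ZMod n)) := by
    rw [map_pow, aElem, antipodeCCn, MonoidAlgebra.lift_of]
    show (MonoidAlgebra.of ℂ (Cyc n) (Multiplicative.ofAdd (1:ZMod n))⁻¹) ^ i = _
    rw [← map_pow]
    congr 1
    rw [← ofAdd_neg, ← ofAdd_nsmul]
    push_cast
    simp
  rw [this, phi_of]
  congr 1
  push_cast
  ring

lemma phi_Ee (hω : IsPrimitiveRoot ω n) (j k : ℤ) :
    phi n ω hne hone j (Ee n ω k) = if (n:ℤ) ∣ (j - k) then 1 else 0 := by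
  have hn : n ≠ 0 := NeZero.ne n
  rw [Ee, map_smul, map_sum]
  have h1 : ∀ i ∈ Finset.range n,
      phi n ω hne hone j (ω ^ (-(i * k : ℤ)) • aElem n ^ i) = ω ^ ((i:ℤ) * (j - k)) := by
    intro i _
    rw [map_smul, phi_aElem_pow hne hone, smul_eq_mul, ← zpow_add₀ hne]
    congr 1; ring
  rw [Finset.sum_congr rfl h1, sum_omega_zpow hn hω]
  split_ifs with h
  · simp [Nat.cast_ne_zero.mpr hn, inv_mul_cancel₀]
  · simp

lemma phi_anti_Ee (hω : IsPrimitiveRoot ω n) (j k : ℤ) :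
    phi n ω hne hone j (antipodeCCn n (Ee n ω k)) = if (n:ℤ) ∣ (j + k) then 1 else 0 := by
  have hn : n ≠ 0 := NeZero.ne n
  rw [Ee, map_smul, map_smul, map_sum, map_sum]
  have h1 : ∀ i ∈ Finset.range n,
      phi n ω hne hone j (antipodeCCn n (ω ^ (-(i * k : ℤ)) • aElem n ^ i))
        = ω ^ ((i:ℤ) * (-(j + k))) := by
    intro i _
    rw [map_smul, map_smul, phi_anti_aElem_pow hne hone, smul_eq_mul, ← zpow_add₀ hne]
    congr 1; ring
  rw [Finset.sum_congr rfl h1, sum_omega_zpow hn hω]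
  have hiff : (n:ℤ) ∣ (-(j + k)) ↔ (n:ℤ) ∣ (j + k) := dvd_neg
  split_ifs with h h2 h2
  · simp [Nat.cast_ne_zero.mpr hn, inv_mul_cancel₀]
  · exact absurd (hiff.mp h) h2
  · exact absurd (hiff.mpr h2) h
  · simp

lemma dvd_sub_small {a b : ℕ} (ha : a < n) (hb : b < n)
    (h : (n:ℤ) ∣ ((a:ℤ) - (b:ℤ))) : a = b := by
  obtain ⟨t, ht⟩ := h
  have hn1 : (1:ℤ) ≤ (n:ℤ) := by omega
  rcases lt_trichotomy t 0 with hc | hc | hc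
  · have : (n:ℤ) * t ≤ -(n:ℤ) := by nlinarith
    omega
  · subst hc; omega
  · have : (n:ℤ) ≤ (n:ℤ) * t := by nlinarith
    omega

lemma phi_coeff (z : CCn n) (m : Cyc n) (hω : IsPrimitiveRoot ω n) :
    ∑ j ∈ Finset.range n,
      ω ^ (-((j : ℤ) * ((Multiplicative.toAdd m).val : ℤ))) * phi n ω hne hone j z
      = (n : ℂ) * z.coeff m := by
  have hn : n ≠ 0 := NeZero.ne n
  have hlift : ∀ j : ℤ, phi n ω hne hone j z
      = ∑ g : Cyc n, z.coeff g * ω ^ (j * ((Multiplicative.toAdd g).val : ℤ)) := by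
    intro j
    rw [phi, MonoidAlgebra.lift_apply, Finsupp.sum_fintype]
    · exact Finset.sum_congr rfl fun g _ => by simp [chi, smul_eq_mul]
    · intro a; simp
  calc ∑ j ∈ Finset.range n,
        ω ^ (-((j : ℤ) * ((Multiplicative.toAdd m).val : ℤ))) * phi n ω hne hone j z
      = ∑ j ∈ Finset.range n, ∑ g : Cyc n,
          z.coeff g * ω ^ ((j:ℤ) * (((Multiplicative.toAdd g).val : ℤ)
            - ((Multiplicative.toAdd m).val : ℤ))) := by
        refine Finset.sum_congr rfl fun j _ => ?_
        rw [hlift, Finset.mul_sum]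
        refine Finset.sum_congr rfl fun g _ => ?_
        rw [mul_left_comm]
        congr 1
        rw [← zpow_add₀ hne]
        congr 1
        ring
    _ = ∑ g : Cyc n, z.coeff g * ∑ j ∈ Finset.range n,
          ω ^ ((j:ℤ) * (((Multiplicative.toAdd g).val : ℤ)
            - ((Multiplicative.toAdd m).val : ℤ))) := by
        rw [Finset.sum_comm]
        exact Finset.sum_congr rfl fun g _ => by rw [Finset.mul_sum]
    _ = (n : ℂ) * z.coeff m := by
        rw [Finset.sum_congr rfl fun g (_ : g ∈ Finset.univ) => by
          rw [sum_omega_zpow hn hω]]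
        have hzero : ∀ g : Cyc n, g ≠ m →
            z.coeff g * (if (n:ℤ) ∣ (((Multiplicative.toAdd g).val : ℤ)
              - ((Multiplicative.toAdd m).val : ℤ)) then (n:ℂ) else 0) = 0 := by
          intro g hg
          rw [if_neg, mul_zero]
          intro hdvd
          exact hg (Multiplicative.toAdd.injective (ZMod.val_injective n
            (dvd_sub_small (ZMod.val_lt _) (ZMod.val_lt _) hdvd)))
        rw [Fintype.sum_eq_single m hzero, if_pos (by simp), mul_comm]

lemma phi_inj (hω : IsPrimitiveRoot ω n) {x y : CCn n}
    (h : ∀ j ∈ Finset.range n, phi n ω hne hone j x = phi n ω hne hone j y) : x = y := by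
  have hn : n ≠ 0 := NeZero.ne n
  have key : ∀ m : Cyc n, (n : ℂ) * x.coeff m = (n : ℂ) * y.coeff m := by
    intro m
    rw [← phi_coeff hne hone x m hω, ← phi_coeff hne hone y m hω]
    exact Finset.sum_congr rfl fun j hj => by rw [h j hj]
  have hnC : (n : ℂ) ≠ 0 := Nat.cast_ne_zero.mpr hn
  ext m
  exact mul_left_cancel₀ hnC (key m)

lemma dvd_sub_iff' {j k : ℕ} (hj : j < n) (hk : k < n) :
    (n:ℤ) ∣ ((j:ℤ) - (k:ℤ)) ↔ j = k := by
  constructor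
  · exact fun h => dvd_sub_small hj hk h
  · rintro rfl; simp

lemma dvd_add_small {a b : ℕ} (ha : a < n) (hb : b < n)
    (h : (n:ℤ) ∣ ((a:ℤ) + (b:ℤ))) : a + b = 0 ∨ a + b = n := by
  obtain ⟨t, ht⟩ := h
  have hn1 : (1:ℤ) ≤ (n:ℤ) := by omega
  rcases lt_trichotomy t 0 with hc | hc | hc
  · have : (n:ℤ) * t ≤ -(n:ℤ) := by nlinarith
    omega
  · subst hc; omega
  · rcases eq_or_lt_of_le (by omega : (1:ℤ) ≤ t) with hc1 | hc1
    · rw [← hc1, mul_one] at ht; omega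
    · have : 2 * (n:ℤ) ≤ (n:ℤ) * t := by nlinarith
      omega

lemma drinfeld_expand (d : ℕ) :
    drinfeldCCn n ω d = ∑ kk ∈ Finset.range n, ∑ l ∈ Finset.range n,
      ω ^ (d * kk * l) • (antipodeCCn n (Ee n ω (l:ℤ)) * Ee n ω (kk:ℤ)) := by
  rw [drinfeldCCn, Rmat]
  simp [map_sum, map_smul, TensorProduct.comm_tmul, LinearMap.rTensor_tmul,
    LinearMap.mul'_apply]

end DrinfeldAux

/-- The Drinfeld element of `(ℂC_n, R_d)` is `u_d = ∑_{k=0}^{n-1} ω^{-dk²} E_k`. -/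
theorem drinfeldCCn_eq (n : ℕ) (hn : 1 ≤ n) (ω : ℂ) (hω : IsPrimitiveRoot ω n)
    (d : ℕ) (hd : d < n) :
    drinfeldCCn n ω d
      = ∑ kk ∈ Finset.range n, ω ^ (-(d * kk ^ 2 : ℤ)) • Ee n ω (kk : ℤ) := by
  haveI : NeZero n := ⟨by omega⟩
  have hn : n ≠ 0 := by omega
  have hne : ω ≠ 0 := hω.ne_zero hn
  have hone : ω ^ (n:ℤ) = 1 := by rw [zpow_natCast, hω.pow_eq_one]
  apply phi_inj hne hone hω
  intro j hj
  rw [Finset.mem_range] at hj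
  have hjm : j ∈ Finset.range n := Finset.mem_range.mpr hj
  -- right-hand side
  have hR : phi n ω hne hone j
      (∑ kk ∈ Finset.range n, ω ^ (-(d * kk ^ 2 : ℤ)) • Ee n ω (kk : ℤ))
      = ω ^ (-(d * j ^ 2 : ℤ)) := by
    rw [map_sum]
    have h1 : ∀ k ∈ Finset.range n,
        phi n ω hne hone j (ω ^ (-(d * k ^ 2 : ℤ)) • Ee n ω (k : ℤ))
          = ω ^ (-(d * k ^ 2 : ℤ)) * (if (n:ℤ) ∣ ((j:ℤ) - (k:ℤ)) then 1 else 0) := by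
      intro k _
      rw [map_smul, phi_Ee hne hone hω, smul_eq_mul]
    rw [Finset.sum_congr rfl h1]
    rw [Finset.sum_eq_single_of_mem j hjm (fun k hk hkj => by
      rw [if_neg, mul_zero]
      intro hdvd
      exact hkj (dvd_sub_small hj (Finset.mem_range.mp hk) hdvd).symm)]
    rw [if_pos (by simp), mul_one]
  rw [hR, drinfeld_expand, map_sum]
  -- left-hand side
  have hL : ∀ k ∈ Finset.range n,
      phi n ω hne hone j
        (∑ l ∈ Finset.range n, ω ^ (d * k * l) • (antipodeCCn n (Ee n ω (l:ℤ)) * Ee n ω (k:ℤ)))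
      = (if (n:ℤ) ∣ ((j:ℤ) - (k:ℤ)) then 1 else 0) *
          ∑ l ∈ Finset.range n, ω ^ ((d * k * l : ℕ) : ℤ) *
            (if (n:ℤ) ∣ ((j:ℤ) + (l:ℤ)) then 1 else 0) := by
    intro k _
    rw [map_sum, Finset.mul_sum]
    refine Finset.sum_congr rfl fun l _ => ?_
    rw [map_smul, map_mul, phi_anti_Ee hne hone hω, phi_Ee hne hone hω, smul_eq_mul,
      zpow_natCast]
    ring
  rw [Finset.sum_congr rfl hL]
  rw [Finset.sum_eq_single_of_mem j hjm (fun k hk hkj => by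
    rw [if_neg, zero_mul]
    intro hdvd
    exact hkj (dvd_sub_small hj (Finset.mem_range.mp hk) hdvd).symm)]
  rw [if_pos (by simp), one_mul]
  -- inner sum over l
  obtain ⟨l₀, hl₀n, hjl₀⟩ : ∃ l₀, l₀ < n ∧ (j + l₀ = 0 ∨ j + l₀ = n) := by
    rcases Nat.eq_zero_or_pos j with rfl | hjpos
    · exact ⟨0, by omega, Or.inl rfl⟩
    · exact ⟨n - j, by omega, Or.inr (by omega)⟩
  have hl₀m : l₀ ∈ Finset.range n := Finset.mem_range.mpr hl₀n
  have hdvd₀ : (n:ℤ) ∣ ((j:ℤ) + (l₀:ℤ)) := by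
    rcases hjl₀ with h | h
    · exact ⟨0, by push_cast; omega⟩
    · exact ⟨1, by push_cast; omega⟩
  have huniq : ∀ l ∈ Finset.range n, l ≠ l₀ →
      ω ^ ((d * j * l : ℕ) : ℤ) * (if (n:ℤ) ∣ ((j:ℤ) + (l:ℤ)) then 1 else 0) = 0 := by
    intro l hl hll
    rw [if_neg, mul_zero]
    intro hdvd
    have hln : l < n := Finset.mem_range.mp hl
    have h := dvd_add_small hj hln hdvd
    exfalso
    apply hll
    omega
  rw [Finset.sum_eq_single_of_mem l₀ hl₀m huniq]
  rw [if_pos hdvd₀, mul_one]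
  apply zpow_congr hne hone
  have : ((d * j * l₀ : ℕ) : ℤ) - (-(d * j ^ 2 : ℤ)) = (d * j) * ((j:ℤ) + (l₀:ℤ)) := by
    push_cast; ring
  rw [this]
  exact Dvd.dvd.mul_left hdvd₀ _

end
end

section
/- Fix N ≥ 1, L ≥ 2, ν, λ ∈ {+1, −1}, and let k be a field containing a primitive 4NL-th root of unity ω. Define, for 0 ≤ i ≤ N−1, 0 ≤ j ≤ L−1 and a sign ±: α_{ij±} = ±ω^{L(2i+(1−ν)/2)+N(2j+(1−λ)/2)} and β_{ij±} = ±ω^{L(2i+(1−ν)/2)−N(2j+(1−λ)/2)}. Then the set I_{νλ} = { (α,β) ∈ k× × k× : (αβ)^N = ν, (αβ⁻¹)^L = λ } equals exactly { (α_{ij+}, β_{ij+}), (α_{ij−}, β_{ij−}) : 0 ≤ i ≤ N−1, 0 ≤ j ≤ L−1 }; in particular |I_{νλ}| = 2NL. -/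
noncomputable section

variable (k : Type*) [Field k]

/-- For `ν = (−1)^{eν}`, `λ = (−1)^{el}` (`eν, el ∈ {0,1}`) and `ω` a primitive `4NL`-th
root of unity, the set `I_{νλ} = {(α,β) : (αβ)^N = ν, (αβ⁻¹)^L = λ}` consists exactly of
the pairs `(±ω^{L(2i+eν)+N(2j+el)}, ±ω^{L(2i+eν)−N(2j+el)})` for `0 ≤ i < N`,
`0 ≤ j < L`; in particular it has `2NL` elements. -/
theorem braiding_parameter_set (N L : ℕ) (hN : 1 ≤ N) (hL : 2 ≤ L)
    (eν el : ℕ) (hν : eν ≤ 1) (hl : el ≤ 1) (ω : k)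
    (hω : IsPrimitiveRoot ω (4 * N * L)) :
    {p : k × k | p.1 ≠ 0 ∧ p.2 ≠ 0 ∧ (p.1 * p.2) ^ N = (-1 : k) ^ eν ∧
        (p.1 * p.2⁻¹) ^ L = (-1 : k) ^ el}
      = {p : k × k | ∃ i < N, ∃ j < L, ∃ ε : k, (ε = 1 ∨ ε = -1) ∧
          p.1 = ε * ω ^ (L * (2 * i + eν) + N * (2 * j + el)) ∧
          p.2 = ε * ω ^ ((L * (2 * i + eν) : ℤ) - (N * (2 * j + el) : ℤ))} ∧
    {p : k × k | p.1 ≠ 0 ∧ p.2 ≠ 0 ∧ (p.1 * p.2) ^ N = (-1 : k) ^ eν ∧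
        (p.1 * p.2⁻¹) ^ L = (-1 : k) ^ el}.ncard = 2 * N * L := by
  have hN0 : 0 < N := hN
  have hL0 : 0 < L := by omega
  have hNL : 0 < N * L := Nat.mul_pos hN0 hL0
  have hn : 0 < 4 * N * L := Nat.mul_pos (Nat.mul_pos (by norm_num) hN0) hL0
  haveI : NeZero (4 * N * L) := ⟨hn.ne'⟩
  have hω0 : ω ≠ 0 := hω.ne_zero hn.ne'
  have hone : ω ^ (4 * N * L) = 1 := hω.pow_eq_one
  have hm1ne : ω ^ (2 * (N * L)) ≠ 1 :=
    hω.pow_ne_one_of_pos_of_lt (by positivity) (by nlinarith)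
  have hm1 : ω ^ (2 * (N * L)) = -1 := by
    rcases mul_self_eq_one_iff.mp (show ω ^ (2 * (N * L)) * ω ^ (2 * (N * L)) = 1 by
      rw [← pow_add, show 2 * (N * L) + 2 * (N * L) = 4 * N * L by ring]; exact hone) with h | h
    · exact absurd h hm1ne
    · exact h
  have hne1 : (-1 : k) ≠ 1 := hm1 ▸ hm1ne
  have hm1z : ω ^ ((2 * N * L : ℤ)) = -1 := by
    rw [show ((2 * N * L : ℤ)) = ((2 * (N * L) : ℕ) : ℤ) by push_cast; ring, zpow_natCast]
    exact hm1
  have hpow : ∀ m : ℤ, ω ^ ((2 * N * L : ℤ) * m) = (-1 : k) ^ m := fun m => by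
    rw [zpow_mul, hm1z]
  have hneg : ∀ m c : ℤ, (-1 : k) ^ (2 * m + c) = (-1 : k) ^ c := fun m c => by
    rw [zpow_add₀ (by norm_num : (-1 : k) ≠ 0), zpow_mul]
    norm_num
  have key2 : ∀ x y : ℤ, ω ^ x = ω ^ y ↔ ((4 * N * L : ℕ) : ℤ) ∣ x - y := by
    intro x y
    constructor
    · intro h
      rw [← hω.zpow_eq_one_iff_dvd, zpow_sub₀ hω0, h, div_self (zpow_ne_zero _ hω0)]
    · intro h
      have h2 := (hω.zpow_eq_one_iff_dvd _).mpr h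
      rw [zpow_sub₀ hω0, div_eq_one_iff_eq (zpow_ne_zero _ hω0)] at h2
      exact h2
  have key3 : ∀ ε : k, ε * ε = 1 → ∀ (E : ℕ) (F : ℤ),
      (ε * ω ^ E) * (ε * ω ^ F) = ω ^ ((E : ℤ) + F) := by
    intro ε hε E F
    calc (ε * ω ^ E) * (ε * ω ^ F) = (ε * ε) * (ω ^ (E : ℤ) * ω ^ F) := by
          rw [zpow_natCast]; ring
      _ = ω ^ ((E : ℤ) + F) := by rw [hε, one_mul, zpow_add₀ hω0]
  have key4 : ∀ ε : k, ε * ε = 1 → ∀ (E : ℕ) (F : ℤ),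
      (ε * ω ^ E) * (ε * ω ^ F)⁻¹ = ω ^ ((E : ℤ) - F) := by
    intro ε hε E F
    calc (ε * ω ^ E) * (ε * ω ^ F)⁻¹ = (ε * ε) * (ω ^ (E : ℤ) * (ω ^ F)⁻¹) := by
          rw [mul_inv, inv_eq_of_mul_eq_one_right hε, zpow_natCast]; ring
      _ = ω ^ ((E : ℤ) - F) := by rw [hε, one_mul, zpow_sub₀ hω0, div_eq_mul_inv]
  have hset : {p : k × k | p.1 ≠ 0 ∧ p.2 ≠ 0 ∧ (p.1 * p.2) ^ N = (-1 : k) ^ eν ∧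
        (p.1 * p.2⁻¹) ^ L = (-1 : k) ^ el}
      = {p : k × k | ∃ i < N, ∃ j < L, ∃ ε : k, (ε = 1 ∨ ε = -1) ∧
          p.1 = ε * ω ^ (L * (2 * i + eν) + N * (2 * j + el)) ∧
          p.2 = ε * ω ^ ((L * (2 * i + eν) : ℤ) - (N * (2 * j + el) : ℤ))} := by
    ext ⟨α, β⟩
    simp only [Set.mem_setOf_eq]
    constructor
    · rintro ⟨hα, hβ, h1, h2⟩
      have e1 : (α * β) ^ (2 * (N * L)) = 1 := by
        rw [show 2 * (N * L) = N * (2 * L) by ring, pow_mul, h1, ← pow_mul]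
        exact Even.neg_one_pow ⟨eν * L, by ring⟩
      have e2 : (α * β⁻¹) ^ (2 * (N * L)) = 1 := by
        rw [show 2 * (N * L) = L * (2 * N) by ring, pow_mul, h2, ← pow_mul]
        exact Even.neg_one_pow ⟨el * N, by ring⟩
      have hαn : α ^ (4 * N * L) = 1 := by
        have h : (α ^ 2) ^ (2 * (N * L)) = 1 := by
          rw [show α ^ 2 = (α * β) * (α * β⁻¹) by field_simp, mul_pow, e1, e2, one_mul]
        rw [show 4 * N * L = 2 * (2 * (N * L)) by ring, pow_mul]
        exact h
      have hβn : β ^ (4 * N * L) = 1 := by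
        have h : (β ^ 2) ^ (2 * (N * L)) = 1 := by
          rw [show β ^ 2 = (α * β) * (α * β⁻¹)⁻¹ by field_simp,
            mul_pow, e1, inv_pow, e2, inv_one, mul_one]
        rw [show 4 * N * L = 2 * (2 * (N * L)) by ring, pow_mul]
        exact h
      obtain ⟨a, ha_lt, ha⟩ := hω.eq_pow_of_pow_eq_one hαn
      obtain ⟨b, hb_lt, hb⟩ := hω.eq_pow_of_pow_eq_one hβn
      have d1 : ((4 * N * L : ℕ) : ℤ) ∣ ((a : ℤ) + b) * N - 2 * N * L * eν := by
        rw [← key2]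
        calc ω ^ (((a : ℤ) + b) * (N : ℤ))
            = ((ω ^ (a : ℤ)) * ω ^ (b : ℤ)) ^ (N : ℤ) := by rw [zpow_mul, zpow_add₀ hω0]
          _ = (α * β) ^ N := by rw [zpow_natCast, zpow_natCast, zpow_natCast, ha, hb]
          _ = (-1 : k) ^ eν := h1
          _ = ω ^ ((2 * N * L : ℤ) * (eν : ℤ)) := by rw [hpow, zpow_natCast]
      have d2 : ((4 * N * L : ℕ) : ℤ) ∣ ((a : ℤ) - b) * L - 2 * N * L * el := by
        rw [← key2]
        calc ω ^ (((a : ℤ) - b) * (L : ℤ))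
            = ((ω ^ (a : ℤ)) * (ω ^ (b : ℤ))⁻¹) ^ (L : ℤ) := by
              rw [zpow_mul, zpow_sub₀ hω0, div_eq_mul_inv]
          _ = (α * β⁻¹) ^ L := by
              rw [zpow_natCast, zpow_natCast, zpow_natCast, ha, hb]
          _ = (-1 : k) ^ el := h2
          _ = ω ^ ((2 * N * L : ℤ) * (el : ℤ)) := by rw [hpow, zpow_natCast]
      obtain ⟨s0, hs0⟩ := d1
      obtain ⟨t0, ht0⟩ := d2
      have hNne : (N : ℤ) ≠ 0 := by omega
      have hLne : (L : ℤ) ≠ 0 := by omega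
      have hs : (a : ℤ) + b = 2 * L * eν + 4 * L * s0 := by
        have h2 : (N : ℤ) * ((a : ℤ) + b) = (N : ℤ) * (2 * L * eν + 4 * L * s0) := by
          push_cast at hs0 ⊢
          linear_combination hs0
        exact mul_left_cancel₀ hNne h2
      have ht : (a : ℤ) - b = 2 * N * el + 4 * N * t0 := by
        have h2 : (L : ℤ) * ((a : ℤ) - b) = (L : ℤ) * (2 * N * el + 4 * N * t0) := by
          push_cast at ht0 ⊢
          linear_combination ht0
        exact mul_left_cancel₀ hLne h2
      set s' := s0 / (N : ℤ) with hs'def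
      set t' := t0 / (L : ℤ) with ht'def
      have hiZ : 0 ≤ s0 % (N : ℤ) := Int.emod_nonneg _ hNne
      have hiZ' : s0 % (N : ℤ) < N := Int.emod_lt_of_pos _ (by omega)
      have hjZ : 0 ≤ t0 % (L : ℤ) := Int.emod_nonneg _ hLne
      have hjZ' : t0 % (L : ℤ) < L := Int.emod_lt_of_pos _ (by omega)
      have hsd : s0 = (N : ℤ) * s' + s0 % (N : ℤ) := (Int.mul_ediv_add_emod s0 N).symm
      have htd : t0 = (L : ℤ) * t' + t0 % (L : ℤ) := (Int.mul_ediv_add_emod t0 L).symm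
      have hiN : ((s0 % (N : ℤ)).toNat : ℤ) = s0 % (N : ℤ) := Int.toNat_of_nonneg hiZ
      have hjL : ((t0 % (L : ℤ)).toNat : ℤ) = t0 % (L : ℤ) := Int.toNat_of_nonneg hjZ
      refine ⟨(s0 % (N : ℤ)).toNat, by omega, (t0 % (L : ℤ)).toNat, by omega,
        (-1 : k) ^ (s' + t'), ?_, ?_, ?_⟩
      · rcases Int.even_or_odd (s' + t') with h | h
        · exact Or.inl (Even.neg_one_zpow h)
        · exact Or.inr (Odd.neg_one_zpow h)
      · have haz : ((a : ℕ) : ℤ) =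
            ((L * (2 * (s0 % (N : ℤ)).toNat + eν) + N * (2 * (t0 % (L : ℤ)).toNat + el) : ℕ) : ℤ)
              + (2 * N * L : ℤ) * (s' + t') := by
          have h2 : (2 : ℤ) * (a : ℤ) = 2 * (((L * (2 * (s0 % (N : ℤ)).toNat + eν)
              + N * (2 * (t0 % (L : ℤ)).toNat + el) : ℕ) : ℤ)
              + (2 * N * L : ℤ) * (s' + t')) := by
            push_cast [hiN, hjL]
            linear_combination hs + ht + 4 * (L : ℤ) * hsd + 4 * (N : ℤ) * htd
          exact mul_left_cancel₀ two_ne_zero h2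
        rw [← ha, ← zpow_natCast ω a, haz, zpow_add₀ hω0, hpow, zpow_natCast]
        exact mul_comm _ _
      · have hbz : ((b : ℕ) : ℤ) =
            (((L : ℕ) * (2 * (s0 % (N : ℤ)).toNat + eν) : ℤ)
              - ((N : ℕ) * (2 * (t0 % (L : ℤ)).toNat + el) : ℤ))
              + (2 * N * L : ℤ) * (s' - t') := by
          have h2 : (2 : ℤ) * (b : ℤ) = 2 * ((((L : ℕ) * (2 * (s0 % (N : ℤ)).toNat + eν) : ℤ)
              - ((N : ℕ) * (2 * (t0 % (L : ℤ)).toNat + el) : ℤ))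
              + (2 * N * L : ℤ) * (s' - t')) := by
            push_cast [hiN, hjL]
            linear_combination hs - ht + 4 * (L : ℤ) * hsd - 4 * (N : ℤ) * htd
          exact mul_left_cancel₀ two_ne_zero h2
        have hεs : (-1 : k) ^ (s' - t') = (-1 : k) ^ (s' + t') := by
          rw [show s' - t' = 2 * (-t') + (s' + t') by ring, hneg]
        rw [← hb, ← zpow_natCast ω b, hbz, zpow_add₀ hω0, hpow, hεs]
        exact mul_comm _ _
    · rintro ⟨i, hi, j, hj, ε, hε, h1, h2⟩
      have hε2 : ε * ε = 1 := by rcases hε with rfl | rfl <;> norm_num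
      have hεne : ε ≠ 0 := by rcases hε with rfl | rfl <;> norm_num
      refine ⟨by rw [h1]; exact mul_ne_zero hεne (pow_ne_zero _ hω0),
        by rw [h2]; exact mul_ne_zero hεne (zpow_ne_zero _ hω0), ?_, ?_⟩
      · calc (α * β) ^ N
            = (ω ^ (((L * (2 * i + eν) + N * (2 * j + el) : ℕ) : ℤ)
                + ((L * (2 * i + eν) : ℤ) - (N * (2 * j + el) : ℤ)))) ^ (N : ℤ) := by
              rw [h1, h2, key3 ε hε2, ← zpow_natCast]
          _ = ω ^ ((2 * N * L : ℤ) * (2 * (i : ℤ) + eν)) := by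
              rw [← zpow_mul]; congr 1; push_cast; ring
          _ = (-1 : k) ^ (2 * (i : ℤ) + (eν : ℤ)) := hpow _
          _ = (-1 : k) ^ eν := by rw [hneg, zpow_natCast]
      · calc (α * β⁻¹) ^ L
            = (ω ^ (((L * (2 * i + eν) + N * (2 * j + el) : ℕ) : ℤ)
                - ((L * (2 * i + eν) : ℤ) - (N * (2 * j + el) : ℤ)))) ^ (L : ℤ) := by
              rw [h1, h2, key4 ε hε2, ← zpow_natCast]
          _ = ω ^ ((2 * N * L : ℤ) * (2 * (j : ℤ) + el)) := by
              rw [← zpow_mul]; congr 1; push_cast; ring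
          _ = (-1 : k) ^ (2 * (j : ℤ) + (el : ℤ)) := hpow _
          _ = (-1 : k) ^ el := by rw [hneg, zpow_natCast]
  refine ⟨hset, ?_⟩
  rw [hset]
  set f : Fin N × Fin L × Bool → k × k := fun q =>
    ((if q.2.2 then (-1 : k) else 1) * ω ^ (L * (2 * (q.1 : ℕ) + eν) + N * (2 * (q.2.1 : ℕ) + el)),
     (if q.2.2 then (-1 : k) else 1) *
       ω ^ ((L * (2 * (q.1 : ℕ) + eν) : ℤ) - (N * (2 * (q.2.1 : ℕ) + el) : ℤ))) with hf
  have hinj : Function.Injective f := by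
    rintro ⟨⟨i, hi⟩, ⟨j, hj⟩, δ⟩ ⟨⟨i', hi'⟩, ⟨j', hj'⟩, δ'⟩ h
    simp only [hf, Prod.mk.injEq] at h
    obtain ⟨h1, h2⟩ := h
    set ε : k := if δ then -1 else 1 with hεdef
    set ε' : k := if δ' then -1 else 1 with hε'def
    have hε2 : ε * ε = 1 := by cases δ <;> simp [hεdef]
    have hε'2 : ε' * ε' = 1 := by cases δ' <;> simp [hε'def]
    have q1 : ω ^ (((L * (2 * i + eν) + N * (2 * j + el) : ℕ) : ℤ)
          + ((L * (2 * i + eν) : ℤ) - (N * (2 * j + el) : ℤ)))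
        = ω ^ (((L * (2 * i' + eν) + N * (2 * j' + el) : ℕ) : ℤ)
          + ((L * (2 * i' + eν) : ℤ) - (N * (2 * j' + el) : ℤ))) := by
      rw [← key3 ε hε2, ← key3 ε' hε'2, h1, h2]
    have q2 : ω ^ (((L * (2 * i + eν) + N * (2 * j + el) : ℕ) : ℤ)
          - ((L * (2 * i + eν) : ℤ) - (N * (2 * j + el) : ℤ)))
        = ω ^ (((L * (2 * i' + eν) + N * (2 * j' + el) : ℕ) : ℤ)
          - ((L * (2 * i' + eν) : ℤ) - (N * (2 * j' + el) : ℤ))) := by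
      rw [← key4 ε hε2, ← key4 ε' hε'2, h1, h2]
    have hii : i = i' := by
      obtain ⟨c, hc⟩ := (key2 _ _).mp q1
      have hc' : (4 * (L : ℤ)) * ((i : ℤ) - i') = (4 * (L : ℤ)) * ((N : ℤ) * c) := by
        push_cast at hc ⊢
        linear_combination hc
      have hdvd : (N : ℤ) ∣ ((i : ℤ) - i') :=
        ⟨c, mul_left_cancel₀ (by omega : (4 * (L : ℤ)) ≠ 0) hc'⟩
      have : (i : ℤ) - i' = 0 :=
        Int.eq_zero_of_abs_lt_dvd hdvd (abs_lt.mpr ⟨by omega, by omega⟩)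
      omega
    have hjj : j = j' := by
      obtain ⟨c, hc⟩ := (key2 _ _).mp q2
      have hc' : (4 * (N : ℤ)) * ((j : ℤ) - j') = (4 * (N : ℤ)) * ((L : ℤ) * c) := by
        push_cast at hc ⊢
        linear_combination hc
      have hdvd : (L : ℤ) ∣ ((j : ℤ) - j') :=
        ⟨c, mul_left_cancel₀ (by omega : (4 * (N : ℤ)) ≠ 0) hc'⟩
      have : (j : ℤ) - j' = 0 :=
        Int.eq_zero_of_abs_lt_dvd hdvd (abs_lt.mpr ⟨by omega, by omega⟩)
      omega
    subst hii
    subst hjj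
    have hεε : ε = ε' := mul_right_cancel₀ (pow_ne_zero _ hω0) h1
    have hδδ : δ = δ' := by
      cases δ <;> cases δ' <;> simp [hεdef, hε'def] at hεε ⊢ <;>
        first
        | rfl
        | exact absurd hεε.symm hne1
        | exact absurd hεε hne1
    simp [hδδ]
  have himg : {p : k × k | ∃ i < N, ∃ j < L, ∃ ε : k, (ε = 1 ∨ ε = -1) ∧
      p.1 = ε * ω ^ (L * (2 * i + eν) + N * (2 * j + el)) ∧
      p.2 = ε * ω ^ ((L * (2 * i + eν) : ℤ) - (N * (2 * j + el) : ℤ))} = Set.range f := by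
    ext p
    simp only [Set.mem_setOf_eq, Set.mem_range]
    constructor
    · rintro ⟨i, hi, j, hj, ε, (rfl | rfl), h1, h2⟩
      · refine ⟨⟨⟨i, hi⟩, ⟨j, hj⟩, false⟩, ?_⟩
        apply Prod.ext <;> simp [hf, h1, h2]
      · refine ⟨⟨⟨i, hi⟩, ⟨j, hj⟩, true⟩, ?_⟩
        apply Prod.ext <;> simp [hf, h1, h2]
    · rintro ⟨⟨⟨i, hi⟩, ⟨j, hj⟩, δ⟩, rfl⟩
      exact ⟨i, hi, j, hj, if δ then -1 else 1, by cases δ <;> simp, rfl, rfl⟩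
  rw [himg, ← Set.image_univ, Set.ncard_image_of_injective _ hinj, Set.ncard_univ]
  simp only [Nat.card_eq_fintype_card, Fintype.card_prod, Fintype.card_fin, Fintype.card_bool]
  ring

end
end
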